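/- arXiv:1704.07039 — 4 statements merged into one kernel-verified Lean document; each statement's English description precedes it below -/
import Mathlib

section
/- For a standard Young tableau T of shape a partition λ of n, define σ(T) ∈ {±1}^{n-1} by σ(T)_i = +1 if i appears weakly above i+1 in T and σ(T)_i = -1 otherwise. Then the Schur function s_λ equals the sum over all standard Young tableaux T of shape λ of the fundamental quasisymmetric function Q_{σ(T)}. -/
/-- Standard Young tableaux of shape `μ`, with entries `0, …, μ.card - 1`,
strictly increasing along rows and columns. -/
def SYT (μ : YoungDiagram) : Type :=
  {e : {c // c ∈ μ.cells} ≃ Fin μ.card //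
    ∀ c c' : {c // c ∈ μ.cells}, c.1.1 ≤ c'.1.1 → c.1.2 ≤ c'.1.2 → c ≠ c' →
      e c < e c'}

/-- The descent signature of a standard Young tableau: `sytSgn T j = true` (`+1`)
exactly when the entry `j` appears weakly above the entry `j+1` in `T`. -/
def sytSgn {μ : YoungDiagram} (T : SYT μ) (j : ℕ) : Bool :=
  if h : j + 1 < μ.card then
    decide ((T.1.symm ⟨j + 1, h⟩).1.1 ≤ (T.1.symm ⟨j, Nat.lt_of_succ_lt h⟩).1.1)
  else true

/-- The coefficient of the monomial `x^m` in the fundamental quasisymmetric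
function `Q_s` of degree `n`: the number of weakly increasing sequences
`i_0 ≤ i_1 ≤ ⋯ ≤ i_{n-1}` with `i_j < i_{j+1}` whenever `s j = -1` (`false`),
whose content is `m`. -/
noncomputable def QCoeff (n : ℕ) (s : ℕ → Bool) (m : ℕ →₀ ℕ) : ℕ :=
  Nat.card {f : Fin n → ℕ //
    (∀ j k : Fin n, j ≤ k → f j ≤ f k) ∧
    (∀ (j : ℕ) (h : j + 1 < n), s j = false →
        f ⟨j, Nat.lt_of_succ_lt h⟩ < f ⟨j + 1, h⟩) ∧
    (∀ v : ℕ, m v = Nat.card {j : Fin n // f j = v})}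

/-- The coefficient of the monomial `x^m` in the Schur function `s_μ`: the number
of semistandard Young tableaux of shape `μ` and weight `m`. -/
noncomputable def SchurCoeff (μ : YoungDiagram) (m : ℕ →₀ ℕ) : ℕ :=
  Nat.card {T : SemistandardYoungTableau μ //
    ∀ v : ℕ, m v = (μ.cells.filter fun c => T c.1 c.2 = v).card}

namespace Gessel

variable {μ : YoungDiagram}

abbrev Cell (μ : YoungDiagram) : Type := {c : ℕ × ℕ // c ∈ μ.cells}

lemma cell_mem (c : Cell μ) : (c.1.1, c.1.2) ∈ μ := by
  rw [← YoungDiagram.mem_cells]; exact c.2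

instance : Fintype (SYT μ) := by unfold SYT; exact Subtype.fintype _

/-- The predicate on `f` appearing in `QCoeff` for shape `μ` and tableau `T`. -/
def FProp (T : SYT μ) (m : ℕ →₀ ℕ) (f : Fin μ.card → ℕ) : Prop :=
  (∀ j k : Fin μ.card, j ≤ k → f j ≤ f k) ∧
    (∀ (j : ℕ) (h : j + 1 < μ.card), sytSgn T j = false →
        f ⟨j, Nat.lt_of_succ_lt h⟩ < f ⟨j + 1, h⟩) ∧
    (∀ v : ℕ, m v = Nat.card {j : Fin μ.card // f j = v})

lemma QCoeff_eq (T : SYT μ) (m : ℕ →₀ ℕ) :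
    QCoeff μ.card (fun j => sytSgn T j) m = Nat.card {f // FProp T m f} := rfl

/-- Rows weakly decrease along a run of equal values. -/
lemma rows_anti (T : SYT μ) (f : Fin μ.card → ℕ)
    (hmono : ∀ j k : Fin μ.card, j ≤ k → f j ≤ f k)
    (hdesc : ∀ (j : ℕ) (h : j + 1 < μ.card), sytSgn T j = false →
        f ⟨j, Nat.lt_of_succ_lt h⟩ < f ⟨j + 1, h⟩) :
    ∀ (d : ℕ) (a b : Fin μ.card), b.val = a.val + d → f a = f b →
      (T.1.symm b).1.1 ≤ (T.1.symm a).1.1 := by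
  intro d
  induction d with
  | zero =>
    intro a b hb _
    have : a = b := Fin.ext (by omega)
    subst this; exact le_rfl
  | succ d ih =>
    intro a b hb hf
    have hcard : a.val + d + 1 < μ.card := by have := b.isLt; omega
    have hbd : a.val + d < μ.card := by omega
    have b' : Fin μ.card := ⟨a.val + d, hbd⟩
    have h1 : f a ≤ f ⟨a.val + d, hbd⟩ := hmono a _ (by rw [Fin.le_def]; exact Nat.le_add_right _ _)
    have h2 : f ⟨a.val + d, hbd⟩ ≤ f b := hmono _ b (by rw [Fin.le_def]; show a.val + d ≤ b.val; omega)
    have hfb' : f a = f ⟨a.val + d, hbd⟩ := le_antisymm h1 (hf ▸ h2)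
    have hbeq : b = ⟨a.val + d + 1, hcard⟩ := Fin.ext (by show b.val = a.val + d + 1; omega)
    have hsgn : sytSgn T (a.val + d) = true := by
      by_contra h
      have h' : sytSgn T (a.val + d) = false := by
        cases hh : sytSgn T (a.val + d) <;> simp_all
      have hd := hdesc (a.val + d) hcard h'
      have e1 : (⟨a.val + d, Nat.lt_of_succ_lt hcard⟩ : Fin μ.card) = ⟨a.val + d, hbd⟩ := rfl
      rw [e1, ← hbeq] at hd
      omega
    rw [sytSgn, dif_pos hcard] at hsgn
    have hrow : (T.1.symm ⟨a.val + d + 1, hcard⟩).1.1 ≤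
        (T.1.symm ⟨a.val + d, Nat.lt_of_succ_lt hcard⟩).1.1 := of_decide_eq_true hsgn
    have e1 : (⟨a.val + d, Nat.lt_of_succ_lt hcard⟩ : Fin μ.card) = ⟨a.val + d, hbd⟩ := rfl
    rw [e1, ← hbeq] at hrow
    exact hrow.trans (ih a ⟨a.val + d, hbd⟩ rfl hfb')

lemma rows_anti' (T : SYT μ) (f : Fin μ.card → ℕ)
    (hmono : ∀ j k : Fin μ.card, j ≤ k → f j ≤ f k)
    (hdesc : ∀ (j : ℕ) (h : j + 1 < μ.card), sytSgn T j = false →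
        f ⟨j, Nat.lt_of_succ_lt h⟩ < f ⟨j + 1, h⟩)
    (a b : Fin μ.card) (hab : a ≤ b) (hf : f a = f b) :
    (T.1.symm b).1.1 ≤ (T.1.symm a).1.1 :=
  rows_anti T f hmono hdesc (b.val - a.val) a b (by omega) hf

lemma strict_of_row_lt (T : SYT μ) (f : Fin μ.card → ℕ)
    (hmono : ∀ j k : Fin μ.card, j ≤ k → f j ≤ f k)
    (hdesc : ∀ (j : ℕ) (h : j + 1 < μ.card), sytSgn T j = false →
        f ⟨j, Nat.lt_of_succ_lt h⟩ < f ⟨j + 1, h⟩)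
    (a b : Fin μ.card) (hab : a ≤ b)
    (hrow : (T.1.symm a).1.1 < (T.1.symm b).1.1) : f a < f b := by
  rcases lt_or_eq_of_le (hmono a b hab) with h | h
  · exact h
  · exact absurd (rows_anti' T f hmono hdesc a b hab h) (by omega)

/-- The SSYT determined by a standard tableau and a compatible weight sequence. -/
def ssytOf (T : SYT μ) (f : Fin μ.card → ℕ)
    (hmono : ∀ j k : Fin μ.card, j ≤ k → f j ≤ f k)
    (hdesc : ∀ (j : ℕ) (h : j + 1 < μ.card), sytSgn T j = false →
        f ⟨j, Nat.lt_of_succ_lt h⟩ < f ⟨j + 1, h⟩) :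
    SemistandardYoungTableau μ where
  entry i j := if h : (i, j) ∈ μ then f (T.1 ⟨(i, j), (YoungDiagram.mem_cells _).mpr h⟩) else 0
  row_weak' := by
    intro i j1 j2 hj hcell
    have hcell1 : (i, j1) ∈ μ := μ.up_left_mem le_rfl hj.le hcell
    rw [dif_pos hcell1, dif_pos hcell]
    have hT := T.2 ⟨(i, j1), (YoungDiagram.mem_cells _).mpr hcell1⟩
      ⟨(i, j2), (YoungDiagram.mem_cells _).mpr hcell⟩ le_rfl hj.le
      (by simp only [ne_eq, Subtype.mk.injEq, Prod.mk.injEq]; omega)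
    exact hmono _ _ hT.le
  col_strict' := by
    intro i1 i2 j hi hcell
    have hcell1 : (i1, j) ∈ μ := μ.up_left_mem hi.le le_rfl hcell
    rw [dif_pos hcell1, dif_pos hcell]
    have hT : T.1 ⟨(i1, j), (YoungDiagram.mem_cells _).mpr hcell1⟩ <
        T.1 ⟨(i2, j), (YoungDiagram.mem_cells _).mpr hcell⟩ :=
      T.2 _ _ hi.le le_rfl (by simp only [ne_eq, Subtype.mk.injEq, Prod.mk.injEq]; omega)
    refine strict_of_row_lt T f hmono hdesc _ _ hT.le ?_
    simpa using hi
  zeros' := by intro i j h; rw [dif_neg h]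

lemma ssytOf_apply (T : SYT μ) (f : Fin μ.card → ℕ) (hmono) (hdesc) (c : Cell μ) :
    ssytOf T f hmono hdesc c.1.1 c.1.2 = f (T.1 c) := by
  show dite _ _ _ = _
  rw [dif_pos (cell_mem c)]

/-- The key of a cell: (value, column), compared lexicographically. -/
def key (S : SemistandardYoungTableau μ) (c : Cell μ) : ℕ ×ₗ ℕ :=
  toLex (S c.1.1 c.1.2, c.1.2)

lemma key_injective (S : SemistandardYoungTableau μ) : Function.Injective (key S) := by
  intro c c' h
  rw [key, key] at h
  have h1 : S c.1.1 c.1.2 = S c'.1.1 c'.1.2 := congrArg (fun x => (ofLex x).1) h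
  have h2 : c.1.2 = c'.1.2 := congrArg (fun x => (ofLex x).2) h
  rcases lt_trichotomy c.1.1 c'.1.1 with hh | hh | hh
  · have := S.col_strict hh (h2 ▸ cell_mem c')
    rw [← h2] at h1; omega
  · exact Subtype.ext (Prod.ext hh h2)
  · have := S.col_strict hh (h2 ▸ cell_mem c)
    rw [h2] at h1; omega

lemma key_lt (S : SemistandardYoungTableau μ) (c c' : Cell μ)
    (h1 : c.1.1 ≤ c'.1.1) (h2 : c.1.2 ≤ c'.1.2) (h3 : c ≠ c') : key S c < key S c' := by
  rw [key, key, Prod.Lex.lt_iff]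
  rcases lt_or_eq_of_le h1 with hh | hh
  · left
    calc S c.1.1 c.1.2 ≤ S c.1.1 c'.1.2 :=
          S.row_weak_of_le h2 (μ.up_left_mem hh.le le_rfl (cell_mem c'))
      _ < S c'.1.1 c'.1.2 := S.col_strict hh (cell_mem c')
  · have hcol : c.1.2 < c'.1.2 := by
      rcases lt_or_eq_of_le h2 with h | h
      · exact h
      · exact absurd (Subtype.ext (Prod.ext hh h)) h3
    have hv : S c.1.1 c.1.2 ≤ S c'.1.1 c'.1.2 := by
      rw [hh]; exact S.row_weak_of_le h2 (cell_mem c')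
    rcases lt_or_eq_of_le hv with h | h
    · exact Or.inl h
    · exact Or.inr ⟨h, hcol⟩

/-- The set of keys. -/
noncomputable def keyset (S : SemistandardYoungTableau μ) : Finset (ℕ ×ₗ ℕ) :=
  Finset.univ.map ⟨key S, key_injective S⟩

lemma keyset_card (S : SemistandardYoungTableau μ) : (keyset S).card = μ.card :=
  by rw [keyset, Finset.card_map]; simp [YoungDiagram.card]

lemma key_mem_keyset (S : SemistandardYoungTableau μ) (c : Cell μ) : key S c ∈ keyset S := by
  simp [keyset]

/-- The standardization equivalence of an SSYT. -/
noncomputable def stdEquiv (S : SemistandardYoungTableau μ) : Cell μ ≃ Fin μ.card :=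
  (Equiv.ofBijective (fun c => (⟨key S c, key_mem_keyset S c⟩ : {x // x ∈ keyset S}))
    ⟨fun c c' h => key_injective S (congrArg Subtype.val h), by
      rintro ⟨x, hx⟩
      simp only [keyset, Finset.mem_map, Finset.mem_univ, true_and] at hx
      obtain ⟨c, hc⟩ := hx
      exact ⟨c, Subtype.ext hc⟩⟩).trans
    ((keyset S).orderIsoOfFin (keyset_card S)).symm.toEquiv

lemma stdEquiv_lt_iff (S : SemistandardYoungTableau μ) (c c' : Cell μ) :
    stdEquiv S c < stdEquiv S c' ↔ key S c < key S c' := by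
  show ((keyset S).orderIsoOfFin (keyset_card S)).symm ⟨key S c, _⟩ <
      ((keyset S).orderIsoOfFin (keyset_card S)).symm ⟨key S c', _⟩ ↔ _
  rw [OrderIso.lt_iff_lt]
  exact Subtype.mk_lt_mk

lemma stdEquiv_le_iff (S : SemistandardYoungTableau μ) (c c' : Cell μ) :
    stdEquiv S c ≤ stdEquiv S c' ↔ key S c ≤ key S c' := by
  show ((keyset S).orderIsoOfFin (keyset_card S)).symm ⟨key S c, _⟩ ≤
      ((keyset S).orderIsoOfFin (keyset_card S)).symm ⟨key S c', _⟩ ↔ _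
  rw [OrderIso.le_iff_le]
  exact Subtype.mk_le_mk

/-- Standardization of an SSYT. -/
noncomputable def stdSYT (S : SemistandardYoungTableau μ) : SYT μ :=
  ⟨stdEquiv S, fun c c' h1 h2 h3 => (stdEquiv_lt_iff S c c').mpr (key_lt S c c' h1 h2 h3)⟩

/-- The weight sequence of an SSYT. -/
noncomputable def wt (S : SemistandardYoungTableau μ) (k : Fin μ.card) : ℕ :=
  S ((stdEquiv S).symm k).1.1 ((stdEquiv S).symm k).1.2

lemma wt_mono (S : SemistandardYoungTableau μ) (j k : Fin μ.card) (h : j ≤ k) :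
    wt S j ≤ wt S k := by
  have hk : key S ((stdEquiv S).symm j) ≤ key S ((stdEquiv S).symm k) := by
    rw [← stdEquiv_le_iff]
    simpa using h
  rw [key, key, Prod.Lex.le_iff] at hk
  rw [wt, wt]
  rcases hk with h | ⟨h, _⟩
  · exact h.le
  · exact h.le

lemma wt_desc (S : SemistandardYoungTableau μ) (j : ℕ) (h : j + 1 < μ.card)
    (hs : sytSgn (stdSYT S) j = false) :
    wt S ⟨j, Nat.lt_of_succ_lt h⟩ < wt S ⟨j + 1, h⟩ := by
  rw [sytSgn, dif_pos h] at hs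
  have hrow : ((stdSYT S).1.symm ⟨j, Nat.lt_of_succ_lt h⟩).1.1 <
      ((stdSYT S).1.symm ⟨j + 1, h⟩).1.1 := by
    have := of_decide_eq_false hs
    omega
  set c : Cell μ := (stdEquiv S).symm ⟨j, Nat.lt_of_succ_lt h⟩ with hc
  set c' : Cell μ := (stdEquiv S).symm ⟨j + 1, h⟩ with hc'
  have hrow' : c.1.1 < c'.1.1 := hrow
  have hkey : key S c < key S c' := by
    rw [← stdEquiv_lt_iff]
    simp only [hc, hc', Equiv.apply_symm_apply]
    exact Fin.mk_lt_mk.mpr (by omega)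
  rw [key, key, Prod.Lex.lt_iff] at hkey
  rw [wt, wt, ← hc, ← hc']
  rcases hkey with hv | ⟨hv, hcol⟩
  · exact hv
  · exfalso
    have hmem : (c'.1.1, c.1.2) ∈ μ := μ.up_left_mem le_rfl hcol.le (cell_mem c')
    have hlt : S c.1.1 c.1.2 < S c'.1.1 c.1.2 := S.col_strict hrow' hmem
    have hle : S c'.1.1 c.1.2 ≤ S c'.1.1 c'.1.2 := S.row_weak_of_le hcol.le (cell_mem c')
    change S c.1.1 c.1.2 = S c'.1.1 c'.1.2 at hv
    omega

lemma card_filter_eq (p : ℕ × ℕ → Prop) [DecidablePred p] :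
    Nat.card {c : Cell μ // p c.1} = (μ.cells.filter p).card := by
  rw [← Nat.card_eq_finsetCard]
  exact Nat.card_congr
    { toFun := fun c => ⟨c.1.1, Finset.mem_filter.mpr ⟨c.1.2, c.2⟩⟩
      invFun := fun x => ⟨⟨x.1, (Finset.mem_filter.mp x.2).1⟩, (Finset.mem_filter.mp x.2).2⟩
      left_inv := fun c => rfl
      right_inv := fun x => rfl }

lemma wt_content (S : SemistandardYoungTableau μ) (m : ℕ →₀ ℕ)
    (hS : ∀ v : ℕ, m v = (μ.cells.filter fun c => S c.1 c.2 = v).card) (v : ℕ) :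
    m v = Nat.card {j : Fin μ.card // wt S j = v} := by
  rw [hS v, ← card_filter_eq (fun c => S c.1 c.2 = v)]
  exact Nat.card_congr (Equiv.subtypeEquiv (stdEquiv S).symm (fun j => Iff.rfl)).symm

lemma ssytOf_content (T : SYT μ) (f : Fin μ.card → ℕ) (hmono) (hdesc) (m : ℕ →₀ ℕ)
    (hf : ∀ v : ℕ, m v = Nat.card {j : Fin μ.card // f j = v}) (v : ℕ) :
    m v = (μ.cells.filter fun c => ssytOf T f hmono hdesc c.1 c.2 = v).card := by
  rw [hf v, ← card_filter_eq (fun c => ssytOf T f hmono hdesc c.1 c.2 = v)]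
  refine Nat.card_congr (Equiv.subtypeEquiv T.1.symm (fun j => ?_))
  rw [ssytOf_apply T f hmono hdesc (T.1.symm j), Equiv.apply_symm_apply]

lemma key_lt_of_T (T : SYT μ) (f : Fin μ.card → ℕ) (hmono) (hdesc) (c c' : Cell μ)
    (h : T.1 c < T.1 c') :
    key (ssytOf T f hmono hdesc) c < key (ssytOf T f hmono hdesc) c' := by
  rw [key, key, Prod.Lex.lt_iff]
  rw [ssytOf_apply T f hmono hdesc c, ssytOf_apply T f hmono hdesc c']
  rcases lt_or_eq_of_le (hmono _ _ h.le) with hlt | heq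
  · exact Or.inl hlt
  · refine Or.inr ⟨heq, ?_⟩
    by_contra hcol
    push_neg at hcol
    have hrow := rows_anti' T f hmono hdesc (T.1 c) (T.1 c') h.le heq
    simp only [Equiv.symm_apply_apply] at hrow
    have hne : c' ≠ c := by
      intro hh; rw [hh] at h; exact lt_irrefl _ h
    have := T.2 c' c hrow hcol hne
    exact absurd this (not_lt.mpr h.le)

lemma stdEquiv_ssytOf (T : SYT μ) (f : Fin μ.card → ℕ) (hmono) (hdesc) :
    stdEquiv (ssytOf T f hmono hdesc) = T.1 := by
  set S := ssytOf T f hmono hdesc with hS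
  have hg : StrictMono (fun k => stdEquiv S (T.1.symm k)) := by
    intro k k' hk
    rw [stdEquiv_lt_iff]
    refine key_lt_of_T T f hmono hdesc _ _ ?_
    simpa using hk
  have hsurj : Function.Surjective (fun k => stdEquiv S (T.1.symm k)) := fun k =>
    ⟨T.1 ((stdEquiv S).symm k), by simp⟩
  haveI : WellFoundedLT (Fin μ.card) := inferInstance
  have hid : (fun k => stdEquiv S (T.1.symm k)) = (id : Fin μ.card → Fin μ.card) :=
    (StrictMono.range_inj (f := fun k => stdEquiv S (T.1.symm k))
      (g := (id : Fin μ.card → Fin μ.card)) hg (strictMono_id (α := Fin μ.card))).mp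
      (by rw [Set.range_id]; exact Set.range_eq_univ.mpr hsurj)
  refine Equiv.ext (fun c => ?_)
  have := congrFun hid (T.1 c)
  simpa using this

lemma wt_ssytOf (T : SYT μ) (f : Fin μ.card → ℕ) (hmono) (hdesc) :
    wt (ssytOf T f hmono hdesc) = f := by
  funext k
  rw [wt, stdEquiv_ssytOf T f hmono hdesc,
    ssytOf_apply T f hmono hdesc (T.1.symm k), Equiv.apply_symm_apply]

lemma ssytOf_std (S : SemistandardYoungTableau μ) (hmono) (hdesc) :
    ssytOf (stdSYT S) (wt S) hmono hdesc = S := by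
  ext i j
  by_cases h : (i, j) ∈ μ
  · have hc := ssytOf_apply (stdSYT S) (wt S) hmono hdesc ⟨(i, j), (YoungDiagram.mem_cells _).mpr h⟩
    simp only at hc
    rw [hc, wt]
    show S ((stdEquiv S).symm (stdEquiv S _)).1.1 ((stdEquiv S).symm (stdEquiv S _)).1.2 = _
    rw [Equiv.symm_apply_apply]
  · show dite _ _ _ = _
    rw [dif_neg h, S.zeros h]

lemma sigma_eq {ι γ : Type*} {Q : ι → γ → Prop} {i i' : ι} (x : {g // Q i g}) (y : {g // Q i' g})
    (h : i = i') (h2 : x.1 = y.1) : (⟨i, x⟩ : Σ j, {g // Q j g}) = ⟨i', y⟩ := by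
  subst h
  exact congrArg _ (Subtype.ext h2)

lemma finite_F (T : SYT μ) (m : ℕ →₀ ℕ) : Finite {f // FProp T m f} := by
  refine Finite.of_injective (fun F => (fun j => (⟨F.1 j, ?_⟩ : ↥m.support) :
    Fin μ.card → ↥m.support)) ?_
  · rw [Finsupp.mem_support_iff]
    have hc := F.2.2.2 (F.1 j)
    have : Nonempty {k : Fin μ.card // F.1 k = F.1 j} := ⟨⟨j, rfl⟩⟩
    have := Nat.card_pos (α := {k : Fin μ.card // F.1 k = F.1 j})
    omega
  · intro F F' h
    apply Subtype.ext
    funext j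
    exact congrArg Subtype.val (congrFun h j)

/-- The main bijection. -/
noncomputable def mainEquiv (μ : YoungDiagram) (m : ℕ →₀ ℕ) :
    {S : SemistandardYoungTableau μ //
      ∀ v : ℕ, m v = (μ.cells.filter fun c => S c.1 c.2 = v).card} ≃
      Σ T : SYT μ, {f // FProp T m f} where
  toFun S := ⟨stdSYT S.1, wt S.1, wt_mono S.1, wt_desc S.1, wt_content S.1 m S.2⟩
  invFun p := ⟨ssytOf p.1 p.2.1 p.2.2.1 p.2.2.2.1,
    ssytOf_content p.1 p.2.1 p.2.2.1 p.2.2.2.1 m p.2.2.2.2⟩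
  left_inv S := Subtype.ext (ssytOf_std S.1 (wt_mono S.1) (wt_desc S.1))
  right_inv p := by
    obtain ⟨T, f, hf⟩ := p
    exact sigma_eq (ι := SYT μ) (γ := Fin μ.card → ℕ) (Q := fun T g => FProp T m g) _ _
      (Subtype.ext (stdEquiv_ssytOf T f hf.1 hf.2.1)) (wt_ssytOf T f hf.1 hf.2.1)

end Gessel

/-- Gessel's expansion: `s_λ = ∑_{T ∈ SYT(λ)} Q_{σ(T)}`, stated coefficientwise. -/
theorem statement0 (n : ℕ) (μ : YoungDiagram) (hμ : μ.card = n) (m : ℕ →₀ ℕ) :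
    SchurCoeff μ m = ∑ᶠ T : SYT μ, QCoeff n (fun j => sytSgn T j) m := by
  subst hμ
  haveI : ∀ T : SYT μ, Fintype {f // Gessel.FProp T m f} :=
    fun T => @Fintype.ofFinite _ (Gessel.finite_F T m)
  rw [SchurCoeff, Nat.card_congr (Gessel.mainEquiv μ m), Nat.card_eq_fintype_card,
    Fintype.card_sigma, finsum_eq_sum_of_fintype]
  refine Finset.sum_congr rfl (fun T _ => ?_)
  rw [Gessel.QCoeff_eq T m, Nat.card_eq_fintype_card]
end

section
/- Let G be a signed colored graph of type (n,N) satisfying dual equivalence axioms 1, 2, 3, and 5. If every connected component of E_{i-2} ∪ E_{i-1} appears in the allowed 2-color component list (single vertex, path of one (i-2)-edge and one (i-1)-edge, or double edge), then W_i^0(G) = W_i(G), i.e., for every w ∈ W_i(G), every vertex on the (i-1)-package of w has a flat (i-1)-edge. -/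
open Finset

/-- A signed, colored graph of type `(n, N)`: a finite vertex set `V`,
a signature function `sgn v i ∈ {±1}` (encoded as `Bool`, `true` = `+1`)
for `1 ≤ i ≤ N-1`, and edge relations `E i` for each color `1 < i < n`. -/
structure SCG (n N : ℕ) where
  V : Type
  fintypeV : Fintype V
  sgn : V → ℕ → Bool
  E : ℕ → V → V → Prop

namespace SCG

variable {n N : ℕ}

/-- Edges are unordered pairs of distinct vertices with colors `1 < i < n`. -/
def Proper (G : SCG n N) : Prop :=
  ∀ i v w, G.E i v w → G.E i w v ∧ v ≠ w ∧ 1 < i ∧ i < n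

def hasNbr (G : SCG n N) (i : ℕ) (v : G.V) : Prop := ∃ w, G.E i v w

/-- The `i`-neighbor `E_i(v)` of `v` (defaulting to `v` when there is none). -/
noncomputable def nbr (G : SCG n N) (i : ℕ) (v : G.V) : G.V := by
  classical
  exact if h : G.hasNbr i v then h.choose else v

/-- Dual equivalence axiom 1. -/
def Ax1 (G : SCG n N) : Prop :=
  ∀ i, 1 < i → i < n → ∀ w : G.V,
    ((G.sgn w (i - 1) ≠ G.sgn w i) ↔ ∃! x, G.E i w x)

/-- Dual equivalence axiom 2. -/
def Ax2 (G : SCG n N) : Prop :=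
  ∀ i, ∀ w x : G.V, G.E i w x →
    (G.sgn x (i - 1) = !G.sgn w (i - 1)) ∧ (G.sgn x i = !G.sgn w i) ∧
      ∀ h, h + 2 < i ∨ i + 1 < h → G.sgn x h = G.sgn w h

/-- Dual equivalence axiom 3. -/
def Ax3 (G : SCG n N) : Prop :=
  ∀ i, ∀ w x : G.V, G.E i w x →
    ((G.sgn w (i - 2) ≠ G.sgn x (i - 2)) → G.sgn w (i - 2) ≠ G.sgn w (i - 1)) ∧
    ((G.sgn w (i + 1) ≠ G.sgn x (i + 1)) → G.sgn w (i + 1) ≠ G.sgn w i)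

/-- Dual equivalence axiom 5. -/
def Ax5 (G : SCG n N) : Prop :=
  ∀ i j, ∀ w x y : G.V, (i + 3 ≤ j ∨ j + 3 ≤ i) →
    G.E i w x → G.E j x y → ∃ v, G.E j w v ∧ G.E i v y

/-- The connected component of `v` in the graph whose edges have colors in `S`. -/
def Comp (G : SCG n N) (S : Set ℕ) (v : G.V) : Set G.V :=
  {w | Relation.ReflTransGen (fun a b => ∃ i ∈ S, G.E i a b) v w}

def Connected (G : SCG n N) : Prop := ∀ v w : G.V, w ∈ G.Comp Set.univ v

/-- Allowed 2-color components (Figure `λ4`): a single vertex, a path with one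
`(i-1)`-edge and one `i`-edge, or a double edge. -/
def Allowed2 (G : SCG n N) (i : ℕ) : Prop :=
  ∀ v : G.V,
    (G.Comp {i - 1, i} v = {v}) ∨
    (∃ a b c : G.V, G.E (i - 1) a b ∧ G.E i b c ∧
        G.Comp {i - 1, i} v = {a, b, c} ∧ ¬G.hasNbr i a ∧ ¬G.hasNbr (i - 1) c) ∨
    (∃ a b : G.V, G.E (i - 1) a b ∧ G.E i a b ∧ G.Comp {i - 1, i} v = {a, b})

/-- The component of `E_{i-2} ∪ E_{i-1} ∪ E_i` containing `v` is one of the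
allowed 3-color components (Figure `λ5`). -/
def Allowed3At (G : SCG n N) (i : ℕ) (v : G.V) : Prop :=
  (G.Comp (Set.Icc (i - 2) i) v = {v}) ∨
  (∃ a b c d : G.V, G.E (i - 2) a b ∧ G.E (i - 1) b c ∧ G.E i c d ∧
      G.Comp (Set.Icc (i - 2) i) v = {a, b, c, d} ∧
      ¬G.hasNbr (i - 1) a ∧ ¬G.hasNbr i a ∧ ¬G.hasNbr i b ∧
      ¬G.hasNbr (i - 2) c ∧ ¬G.hasNbr (i - 2) d ∧ ¬G.hasNbr (i - 1) d) ∨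
  (∃ a b c d e : G.V, G.E (i - 2) a b ∧ G.E (i - 1) a b ∧ G.E i b c ∧
      G.E (i - 2) c d ∧ G.E (i - 1) d e ∧ G.E i d e ∧
      G.Comp (Set.Icc (i - 2) i) v = {a, b, c, d, e} ∧
      ¬G.hasNbr i a ∧ ¬G.hasNbr (i - 1) c ∧ ¬G.hasNbr (i - 2) e) ∨
  (∃ u p w x y z : G.V, G.E (i - 1) u p ∧ G.E (i - 2) p w ∧ G.E i p x ∧
      G.E i w y ∧ G.E (i - 2) x y ∧ G.E (i - 1) y z ∧
      G.Comp (Set.Icc (i - 2) i) v = {u, p, w, x, y, z} ∧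
      ¬G.hasNbr (i - 2) u ∧ ¬G.hasNbr i u ∧ ¬G.hasNbr (i - 1) w ∧
      ¬G.hasNbr (i - 1) x ∧ ¬G.hasNbr (i - 2) z ∧ ¬G.hasNbr i z)

def Allowed3 (G : SCG n N) (i : ℕ) : Prop := ∀ v : G.V, G.Allowed3At i v

/-- Dual equivalence axiom 4. -/
def Ax4 (G : SCG n N) : Prop :=
  (∀ i, 2 < i → i < n → G.Allowed2 i) ∧ (∀ i, 3 < i → i < n → G.Allowed3 i)

/-- Dual equivalence axiom 6. -/
def Ax6 (G : SCG n N) : Prop :=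
  ∀ i, 1 < i → i < n → ∀ v w : G.V, w ∈ G.Comp (Set.Icc 2 i) v →
    (Relation.ReflTransGen (fun a b => ∃ j, 2 ≤ j ∧ j < i ∧ G.E j a b) v w ∨
      ∃ a b, Relation.ReflTransGen (fun a b => ∃ j, 2 ≤ j ∧ j < i ∧ G.E j a b) v a ∧
        G.E i a b ∧
        Relation.ReflTransGen (fun a b => ∃ j, 2 ≤ j ∧ j < i ∧ G.E j a b) b w)

/-- A dual equivalence graph of type `(n, N)`. -/
def IsDEG (G : SCG n N) : Prop :=
  n ≤ N ∧ G.Proper ∧ G.Ax1 ∧ G.Ax2 ∧ G.Ax3 ∧ G.Ax4 ∧ G.Ax5 ∧ G.Ax6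

/-- The `(m, N)`-restriction: keep all signatures, only edges of color `< m`. -/
def restrict (G : SCG n N) (m : ℕ) : SCG m N :=
  ⟨G.V, G.fintypeV, G.sgn, fun j a b => j < m ∧ G.E j a b⟩

end SCG

/-- The multiplicity of the fundamental quasisymmetric function indexed by
`s : Fin (m-1) → Bool` (entry `j` recording the signature position `j+1`) in the
Schur function `s_μ`, via Gessel's expansion over standard Young tableaux. -/
noncomputable def schurFun (m : ℕ) (μ : YoungDiagram) : (Fin (m - 1) → Bool) → ℕ :=
  fun s => Nat.card {T : SYT μ // ∀ j : Fin (m - 1), sytSgn T j.1 = s j}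

namespace SCG

variable {n N : ℕ}

/-- The quasisymmetric generating function of the graph, recorded as the
multiplicity of each fundamental quasisymmetric function `Q_s`. -/
noncomputable def fullGF (G : SCG n N) : (Fin (N - 1) → Bool) → ℕ :=
  fun s => Nat.card {v : G.V // ∀ j : Fin (N - 1), G.sgn v (j.1 + 1) = s j}

/-- The degree-`m` restricted generating function of a set of vertices, using the
signature window `lo, lo+1, …, lo+m-2`. -/
noncomputable def restGF (G : SCG n N) (S : Set G.V) (lo m : ℕ) :
    (Fin (m - 1) → Bool) → ℕ :=
  fun s => Nat.card {v : G.V // v ∈ S ∧ ∀ j : Fin (m - 1), G.sgn v (lo + j.1) = s j}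

/-- `G` is Schur multiplicity-free for degree `m`. -/
def LSF (G : SCG n N) (m : ℕ) : Prop :=
  ∀ i, m - 2 < i → i < n → ∀ v : G.V,
    ∃ μ : YoungDiagram, μ.card = m ∧
      G.restGF (G.Comp (Set.Icc (i - (m - 3)) i) v) (i - (m - 2)) m = schurFun m μ

/-- `G` is Schur positive for degree `m`. -/
def LSP (G : SCG n N) (m : ℕ) : Prop :=
  ∀ i, m - 2 < i → i < n → ∀ v : G.V,
    ∃ c : Multiset YoungDiagram, (∀ μ ∈ c, μ.card = m) ∧
      G.restGF (G.Comp (Set.Icc (i - (m - 3)) i) v) (i - (m - 2)) m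
        = fun s => (c.map (fun μ => schurFun m μ s)).sum

/-- A locally Schur positive graph. -/
def LSPG (G : SCG n N) : Prop :=
  G.Proper ∧ G.Ax1 ∧ G.Ax2 ∧ G.Ax3 ∧ G.Ax5 ∧ G.LSP 4 ∧ G.LSP 5 ∧ G.LSP 6

/-- `w` has a flat `i`-edge. -/
def FlatEdge (G : SCG n N) (i : ℕ) (w : G.V) : Prop :=
  G.hasNbr i w ∧ G.sgn w (i - 2) = G.sgn (G.nbr i w) (i - 2)

/-- `w` has `i`-type W. -/
def TypeW (G : SCG n N) (i : ℕ) (w : G.V) : Prop :=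
  G.hasNbr (i - 1) w ∧ G.sgn w i = !G.sgn (G.nbr (i - 1) w) i

/-- `w` has `i`-type C. -/
def TypeC (G : SCG n N) (i : ℕ) (w : G.V) : Prop :=
  G.hasNbr i w ∧ (G.hasNbr (i - 1) w → G.sgn w i = G.sgn (G.nbr (i - 1) w) i) ∧
  G.hasNbr (i - 2) w ∧
  ((G.hasNbr (i - 1) w ∧ G.sgn w (i - 1) = G.sgn (G.nbr (i - 2) w) (i - 1)) ∨
   (¬G.hasNbr (i - 1) w ∧ G.sgn w i = G.sgn (G.nbr (i - 1) (G.nbr (i - 2) w)) i))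

/-- A non-flat `i`-chain `(w 0, w 1, …, w (2h-1))`. -/
def IsNonflatChain (G : SCG n N) (i h : ℕ) (w : ℕ → G.V) : Prop :=
  (∀ j < 2 * h, ∀ k < 2 * h, j ≠ k → w j ≠ w k) ∧
  (∀ j, 2 * j + 1 < 2 * h → G.E i (w (2 * j)) (w (2 * j + 1))) ∧
  (∀ j, 2 * j + 2 < 2 * h → G.E (i - 1) (w (2 * j + 1)) (w (2 * j + 2)))

/-- The set `W_i(G)`: vertices of `i`-type W admitting an `i`-neighbor with
`E_{i-1}(w) ≠ E_i(w)`. -/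
def Wset (G : SCG n N) (i : ℕ) : Set G.V :=
  {v | G.hasNbr i v ∧ G.TypeW i v ∧ G.nbr (i - 1) v ≠ G.nbr i v}

/-- The set `W_i(G)`, described via non-flat `i`-chains. -/
def WsetChain (G : SCG n N) (i : ℕ) : Set G.V :=
  {v | ∃ h w j, G.IsNonflatChain i h w ∧ 0 < j ∧ j + 2 ≤ 2 * h ∧ v = w j}

/-- One step `E_{i-1} E_{i-2}`. -/
noncomputable def stepWD (G : SCG n N) (i : ℕ) (v : G.V) : G.V :=
  G.nbr (i - 1) (G.nbr (i - 2) v)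

/-- A flat `i`-chain `(x 0, x 1, …, x (2h-1))`. -/
def IsFlatChain (G : SCG n N) (i h : ℕ) (x : ℕ → G.V) : Prop :=
  (∀ j < 2 * h, ∀ k < 2 * h, j ≠ k → x j ≠ x k) ∧
  (∀ j < 2 * h, G.hasNbr (i - 2) (x j)) ∧
  (∀ j, 2 * j + 1 < 2 * h → G.E i (x (2 * j)) (x (2 * j + 1))) ∧
  (∀ j, 2 * j + 2 < 2 * h → ∃ m : ℕ,
      ¬G.TypeW (i - 1) ((G.stepWD i)^[m] (x (2 * j + 1))) ∧
      x (2 * j + 2) = G.nbr (i - 2) ((G.stepWD i)^[m] (x (2 * j + 1))))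

/-- The set `C_i(G)`: vertices strictly inside a flat `i`-chain of length `> 4`. -/
def Cset (G : SCG n N) (i : ℕ) : Set G.V :=
  {v | ∃ h x j, G.IsFlatChain i h x ∧ 2 ≤ j ∧ j + 3 ≤ 2 * h ∧ v = x j}

/-- The `i`-package of `v`: the component using colors `≤ i-3` and `≥ i+3`. -/
def pkg (G : SCG n N) (i : ℕ) (v : G.V) : Set G.V :=
  G.Comp {h | h + 3 ≤ i ∨ i + 3 ≤ h} v

/-- The set `W_i^0(G)`. -/
def W0set (G : SCG n N) (i : ℕ) : Set G.V :=
  {w | w ∈ G.Wset i ∧ ∀ v ∈ G.pkg (i - 1) w, G.FlatEdge (i - 1) v}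

/-- The set `C_i^0(G)`: members of `C_i(G)` such that all vertices between `x` and
`(E_{i-1}E_{i-2})^m E_i(x)` have flat `(i-2)`-edges, where `m ≥ 0` is minimal with
`(E_{i-1}E_{i-2})^m E_i(x)` not of `(i-1)`-type W. -/
def C0set (G : SCG n N) (i : ℕ) : Set G.V :=
  {x | x ∈ G.Cset i ∧ ∀ m : ℕ,
      ((∀ t < m, G.TypeW (i - 1) ((G.stepWD i)^[t] (G.nbr i x))) ∧
          ¬G.TypeW (i - 1) ((G.stepWD i)^[m] (G.nbr i x))) →
        G.FlatEdge (i - 2) x ∧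
        (∀ t ≤ m, G.FlatEdge (i - 2) ((G.stepWD i)^[t] (G.nbr i x))) ∧
        (∀ t < m, G.FlatEdge (i - 2) (G.nbr (i - 2) ((G.stepWD i)^[t] (G.nbr i x))))}

/-- An isomorphism between the `i`-packages `A` and `B`: a signature- and
edge-preserving involution interchanging them. -/
def PkgIso (G : SCG n N) (i : ℕ) (A B : Set G.V) (φ : G.V → G.V) : Prop :=
  (∀ v ∈ A, φ v ∈ B) ∧ (∀ v ∈ B, φ v ∈ A) ∧ (∀ v ∈ A ∪ B, φ (φ v) = v) ∧
  (∀ v ∈ A ∪ B, ∀ h, h + 3 ≤ i ∨ i + 2 ≤ h → G.sgn (φ v) h = G.sgn v h) ∧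
  (∀ a b : G.V, a ∈ A ∪ B → ∀ h, h + 3 ≤ i ∨ i + 3 ≤ h → G.E h a b →
      G.E h (φ a) (φ b))

/-- The new `i`-neighbor of `v` after swapping the `i`-edges on the packages `S`
using the package isomorphism `φ`. -/
noncomputable def swapMap (G : SCG n N) (i : ℕ) (S : Set G.V) (φ : G.V → G.V)
    (v : G.V) : G.V := by
  classical
  exact if v ∈ S then φ v
    else if G.nbr i v ∈ S then G.nbr i (φ (G.nbr i v))
    else G.nbr i v

/-- The transformed graph: replace the `i`-edges by the pairs `{v, swapMap v}`,
keeping all other data. -/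
noncomputable def transform (G : SCG n N) (i : ℕ) (S : Set G.V) (φ : G.V → G.V) :
    SCG n N :=
  ⟨G.V, G.fintypeV, G.sgn, fun j a b =>
    if j = i then
      (G.hasNbr i a ∧ b = G.swapMap i S φ a) ∨ (G.hasNbr i b ∧ a = G.swapMap i S φ b)
    else G.E j a b⟩

/-- All components of `E_{i-2} ∪ E_{i-1} ∪ E_i` have Schur positive restricted
degree-5 generating functions. -/
def LSP5at (G : SCG n N) (i : ℕ) : Prop :=
  ∀ v : G.V, ∃ c : Multiset YoungDiagram, (∀ μ ∈ c, μ.card = 5) ∧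
    G.restGF (G.Comp (Set.Icc (i - 2) i) v) (i - 3) 5
      = fun s => (c.map (fun μ => schurFun 5 μ s)).sum

/-- The set `U_i(G)`: vertices of `W_i^0(G)` (resp. `C_i^0(G)`) whose transformation
`φ_i` (resp. `ψ_i`) keeps all components of `E_{i-2} ∪ E_{i-1} ∪ E_i` Schur positive. -/
def Uset (G : SCG n N) (i : ℕ) : Set G.V :=
  {v | (v ∈ G.W0set i ∧ ∃ φ : G.V → G.V,
          G.PkgIso i (G.pkg i v) (G.pkg i (G.nbr (i - 1) v)) φ ∧
          SCG.LSP5at (G.transform i (G.pkg i v ∪ G.pkg i (G.nbr (i - 1) v)) φ) i) ∨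
       (v ∈ G.C0set i ∧ ∃ m : ℕ,
          (∀ t < m, G.TypeW (i - 1) ((G.stepWD i)^[t] (G.nbr i v))) ∧
          ¬G.TypeW (i - 1) ((G.stepWD i)^[m] (G.nbr i v)) ∧
          ∃ φ : G.V → G.V,
            G.PkgIso i (G.pkg i (G.nbr (i - 2) v))
              (G.pkg i (G.nbr (i - 2) ((G.stepWD i)^[m] (G.nbr i v)))) φ ∧
            SCG.LSP5at (G.transform i (G.pkg i (G.nbr (i - 2) v) ∪
                G.pkg i (G.nbr (i - 2) ((G.stepWD i)^[m] (G.nbr i v)))) φ) i)}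

end SCG

namespace SCG10Aux

open SCG Relation

variable {n N : ℕ}

lemma nbr_spec (G : SCG n N) {k : ℕ} {v : G.V} (h : G.hasNbr k v) :
    G.E k v (G.nbr k v) := by
  unfold SCG.nbr
  rw [dif_pos h]
  exact h.choose_spec

lemma nbr_eq (G : SCG n N) {k : ℕ} {v x : G.V}
    (he : G.E k v x) (hu : ∀ y, G.E k v y → y = x) : G.nbr k v = x :=
  hu _ (nbr_spec G ⟨x, he⟩)

lemma rtg_invariant {α : Type*} {r : α → α → Prop} {P : α → Prop}
    (hstep : ∀ a b, r a b → P a → P b) {a b : α}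
    (h : Relation.ReflTransGen r a b) (ha : P a) : P b := by
  induction h with
  | refl => exact ha
  | tail _ hs ih => exact hstep _ _ hs ih

section Main

variable {i : ℕ} {G : SCG n N}

/-- uniqueness of `(i-1)`-neighbors from Allowed2. -/
lemma uniq1 (hP : G.Proper) (hAll : G.Allowed2 (i - 1)) {v x x' : G.V}
    (hx : G.E (i - 1) v x) (hx' : G.E (i - 1) v x') : x' = x := by
  have hmem : ∀ z, G.E (i - 1) v z → z ∈ G.Comp {i - 1 - 1, i - 1} v := fun z hz =>
    Relation.ReflTransGen.single ⟨i - 1, Or.inr rfl, hz⟩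
  have key : ∀ z z', G.E (i - 1) v z → G.E (i - 1) v z' → z' = z := by
    rcases hAll v with h | ⟨a, b, c, eab, ebc, hc, hna, hnc⟩ | ⟨a, b, eab2, eab1, hc⟩
    · intro z z' hz hz'
      have := hmem z hz
      rw [h] at this
      exact absurd this.symm (hP _ _ _ hz).2.1
    · -- path case
      intro z z' hz hz'
      have hv : v ∈ G.Comp {i - 1 - 1, i - 1} v := Relation.ReflTransGen.refl
      rw [hc] at hv
      have hzm := hmem z hz; rw [hc] at hzm
      have hzm' := hmem z' hz'; rw [hc] at hzm'
      simp only [Set.mem_insert_iff, Set.mem_singleton_iff] at hv hzm hzm'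
      have hvz := (hP _ _ _ hz).2.1
      have hvz' := (hP _ _ _ hz').2.1
      rcases hv with rfl | rfl | rfl
      · exact absurd ⟨z, hz⟩ hna
      · -- v = b, neighbors must be c
        have hz1 : z = c := by
          rcases hzm with rfl | rfl | rfl
          · exact absurd ⟨v, (hP _ _ _ hz).1⟩ hna
          · exact absurd rfl hvz
          · rfl
        have hz2 : z' = c := by
          rcases hzm' with rfl | rfl | rfl
          · exact absurd ⟨v, (hP _ _ _ hz').1⟩ hna
          · exact absurd rfl hvz'
          · rfl
        rw [hz1, hz2]
      · -- v = c, neighbors must be b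
        have hz1 : z = b := by
          rcases hzm with rfl | rfl | rfl
          · exact absurd ⟨v, (hP _ _ _ hz).1⟩ hna
          · rfl
          · exact absurd rfl hvz
        have hz2 : z' = b := by
          rcases hzm' with rfl | rfl | rfl
          · exact absurd ⟨v, (hP _ _ _ hz').1⟩ hna
          · rfl
          · exact absurd rfl hvz'
        rw [hz1, hz2]
    · -- double edge case
      intro z z' hz hz'
      have hv : v ∈ G.Comp {i - 1 - 1, i - 1} v := Relation.ReflTransGen.refl
      rw [hc] at hv
      have hzm := hmem z hz; rw [hc] at hzm
      have hzm' := hmem z' hz'; rw [hc] at hzm'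
      simp only [Set.mem_insert_iff, Set.mem_singleton_iff] at hv hzm hzm'
      have hvz := (hP _ _ _ hz).2.1
      have hvz' := (hP _ _ _ hz').2.1
      rcases hv with rfl | rfl
      · have hz1 : z = b := by
          rcases hzm with rfl | rfl
          · exact absurd rfl hvz
          · rfl
        have hz2 : z' = b := by
          rcases hzm' with rfl | rfl
          · exact absurd rfl hvz'
          · rfl
        rw [hz1, hz2]
      · have hz1 : z = a := by
          rcases hzm with rfl | rfl
          · rfl
          · exact absurd rfl hvz
        have hz2 : z' = a := by
          rcases hzm' with rfl | rfl
          · rfl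
          · exact absurd rfl hvz'
        rw [hz1, hz2]
  exact key x x' hx hx'

/-- uniqueness of `(i-2)`-neighbors from Allowed2. -/
lemma uniq2 (hP : G.Proper) (hAll : G.Allowed2 (i - 1)) {v x x' : G.V}
    (hx : G.E (i - 2) v x) (hx' : G.E (i - 2) v x') : x' = x := by
  have e21 : i - 1 - 1 = i - 2 := by omega
  have hmem : ∀ z, G.E (i - 2) v z → z ∈ G.Comp {i - 1 - 1, i - 1} v := fun z hz =>
    Relation.ReflTransGen.single ⟨i - 2, Or.inl e21.symm, hz⟩
  rcases hAll v with h | ⟨a, b, c, eab, ebc, hc, hna, hnc⟩ | ⟨a, b, eab2, eab1, hc⟩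
  · have := hmem x hx
    rw [h] at this
    exact absurd this.symm (hP _ _ _ hx).2.1
  · rw [e21] at hnc
    have hv : v ∈ G.Comp {i - 1 - 1, i - 1} v := Relation.ReflTransGen.refl
    rw [hc] at hv
    have hzm := hmem x hx; rw [hc] at hzm
    have hzm' := hmem x' hx'; rw [hc] at hzm'
    simp only [Set.mem_insert_iff, Set.mem_singleton_iff] at hv hzm hzm'
    have hvz := (hP _ _ _ hx).2.1
    have hvz' := (hP _ _ _ hx').2.1
    rcases hv with rfl | rfl | rfl
    · -- v = a, neighbors must be b
      have hz1 : x = b := by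
        rcases hzm with rfl | rfl | rfl
        · exact absurd rfl hvz
        · rfl
        · exact absurd ⟨v, (hP _ _ _ hx).1⟩ hnc
      have hz2 : x' = b := by
        rcases hzm' with rfl | rfl | rfl
        · exact absurd rfl hvz'
        · rfl
        · exact absurd ⟨v, (hP _ _ _ hx').1⟩ hnc
      rw [hz1, hz2]
    · -- v = b, neighbors must be a
      have hz1 : x = a := by
        rcases hzm with rfl | rfl | rfl
        · rfl
        · exact absurd rfl hvz
        · exact absurd ⟨v, (hP _ _ _ hx).1⟩ hnc
      have hz2 : x' = a := by
        rcases hzm' with rfl | rfl | rfl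
        · rfl
        · exact absurd rfl hvz'
        · exact absurd ⟨v, (hP _ _ _ hx').1⟩ hnc
      rw [hz1, hz2]
    · exact absurd ⟨x, hx⟩ hnc
  · have hv : v ∈ G.Comp {i - 1 - 1, i - 1} v := Relation.ReflTransGen.refl
    rw [hc] at hv
    have hzm := hmem x hx; rw [hc] at hzm
    have hzm' := hmem x' hx'; rw [hc] at hzm'
    simp only [Set.mem_insert_iff, Set.mem_singleton_iff] at hv hzm hzm'
    have hvz := (hP _ _ _ hx).2.1
    have hvz' := (hP _ _ _ hx').2.1
    rcases hv with rfl | rfl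
    · have hz1 : x = b := by
        rcases hzm with rfl | rfl
        · exact absurd rfl hvz
        · rfl
      have hz2 : x' = b := by
        rcases hzm' with rfl | rfl
        · exact absurd rfl hvz'
        · rfl
      rw [hz1, hz2]
    · have hz1 : x = a := by
        rcases hzm with rfl | rfl
        · rfl
        · exact absurd rfl hvz
      have hz2 : x' = a := by
        rcases hzm' with rfl | rfl
        · rfl
        · exact absurd rfl hvz'
      rw [hz1, hz2]

/-- A type-W-like vertex has a flat `(i-1)`-edge. -/
lemma typeW_flat (hi : 3 < i) (hin : i < n) (hP : G.Proper) (h1 : G.Ax1)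
    (h2 : G.Ax2) (hAll : G.Allowed2 (i - 1)) {v : G.V}
    (hv : G.hasNbr (i - 1) v)
    (hs : G.sgn v i = !G.sgn (G.nbr (i - 1) v) i) : G.FlatEdge (i - 1) v := by
  have e21 : i - 1 - 1 = i - 2 := by omega
  have e221 : i - 2 - 1 = i - 3 := by omega
  have e32 : i - 1 - 2 = i - 3 := by omega
  set y := G.nbr (i - 1) v with hy
  have hvy : G.E (i - 1) v y := nbr_spec G hv
  refine ⟨hv, ?_⟩
  rw [e32]
  rcases hAll v with h | ⟨a, b, c, eab, ebc, hc, hna, hnc⟩ | ⟨a, b, eab2, eab1, hc⟩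
  · exfalso
    have : y ∈ G.Comp {i - 1 - 1, i - 1} v :=
      Relation.ReflTransGen.single ⟨i - 1, Or.inr rfl, hvy⟩
    rw [h] at this
    exact (hP _ _ _ hvy).2.1 this.symm
  · -- path case
    rw [e21] at eab hnc
    have hv' : v ∈ G.Comp {i - 1 - 1, i - 1} v := Relation.ReflTransGen.refl
    rw [hc] at hv'
    simp only [Set.mem_insert_iff, Set.mem_singleton_iff] at hv'
    -- facts about b and c
    have hbE : G.E (i - 2) b a := (hP _ _ _ eab).1
    have hb3 : G.sgn b (i - 3) ≠ G.sgn b (i - 2) := by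
      have hex : ∃! z, G.E (i - 2) b z :=
        ⟨a, hbE, fun z hz => uniq2 hP hAll hbE hz ▸ rfl⟩
      have := (h1 (i - 2) (by omega) (by omega) b).mpr hex
      rwa [e221] at this
    have hc3 : G.sgn c (i - 3) = G.sgn c (i - 2) := by
      have hnex : ¬ ∃! z, G.E (i - 2) c z := fun ⟨z, hz, _⟩ => hnc ⟨z, hz⟩
      have := (h1 (i - 2) (by omega) (by omega) c)
      rw [e221] at this
      by_contra hne
      exact hnex (this.mp hne)
    have hc2 : G.sgn c (i - 2) = !G.sgn b (i - 2) := by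
      have := (h2 (i - 1) b c ebc).1
      rwa [e21] at this
    rcases hv' with rfl | rfl | rfl
    · exact absurd ⟨y, hvy⟩ hna
    · -- v = b, y = c
      have hyc : y = c := uniq1 hP hAll ebc hvy
      rw [← hy, hyc, hc3, hc2]
      cases h3 : G.sgn v (i - 3) <;> cases h2' : G.sgn v (i - 2) <;> simp_all
    · -- v = c, y = b
      have hyb : y = b := uniq1 hP hAll (hP _ _ _ ebc).1 hvy
      rw [← hy, hyb, hc3, hc2]
      cases h3 : G.sgn b (i - 3) <;> cases h2' : G.sgn b (i - 2) <;> simp_all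
  · -- double edge case: contradicts the type-W condition
    exfalso
    rw [e21] at eab2
    have hv' : v ∈ G.Comp {i - 1 - 1, i - 1} v := Relation.ReflTransGen.refl
    rw [hc] at hv'
    simp only [Set.mem_insert_iff, Set.mem_singleton_iff] at hv'
    have hsgn : G.sgn b i = G.sgn a i :=
      (h2 (i - 2) a b eab2).2.2 i (Or.inr (by omega))
    rcases hv' with rfl | rfl
    · have hyb : y = b := uniq1 hP hAll eab1 hvy
      rw [hyb, hsgn] at hs
      simp at hs
    · have hya : y = a := uniq1 hP hAll (hP _ _ _ eab1).1 hvy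
      rw [hya, ← hsgn] at hs
      simp at hs

/-- Type-W is preserved along low package edges. -/
lemma typeW_step (hi : 3 < i) (hP : G.Proper) (h2 : G.Ax2) (h5 : G.Ax5)
    (hAll : G.Allowed2 (i - 1)) {v v' : G.V} {j : ℕ}
    (hj : j + 3 ≤ i - 1) (he : G.E j v v')
    (hv : G.hasNbr (i - 1) v ∧ G.sgn v i = !G.sgn (G.nbr (i - 1) v) i) :
    G.hasNbr (i - 1) v' ∧ G.sgn v' i = !G.sgn (G.nbr (i - 1) v') i := by
  obtain ⟨hN, hs⟩ := hv
  set y := G.nbr (i - 1) v with hy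
  have hvy : G.E (i - 1) v y := nbr_spec G hN
  obtain ⟨u, hyu, huv'⟩ :=
    h5 (i - 1) j y v v' (Or.inr hj) ((hP _ _ _ hvy).1) he
  have hv'u : G.E (i - 1) v' u := (hP _ _ _ huv').1
  have hNu : G.hasNbr (i - 1) v' := ⟨u, hv'u⟩
  have hnb : G.nbr (i - 1) v' = u :=
    nbr_eq G hv'u (fun z hz => uniq1 hP hAll hv'u hz)
  have hsv : G.sgn v' i = G.sgn v i := (h2 j v v' he).2.2 i (Or.inr (by omega))
  have hsu : G.sgn u i = G.sgn y i := (h2 j y u hyu).2.2 i (Or.inr (by omega))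
  exact ⟨hNu, by rw [hnb, hsv, hsu, hs]⟩

/-- Flatness is preserved along high package edges. -/
lemma flat_step (hi : 3 < i) (hP : G.Proper) (h2 : G.Ax2) (h5 : G.Ax5)
    (hAll : G.Allowed2 (i - 1)) {v v' : G.V} {j : ℕ}
    (hj : i - 1 + 3 ≤ j) (he : G.E j v v')
    (hv : G.FlatEdge (i - 1) v) : G.FlatEdge (i - 1) v' := by
  obtain ⟨hN, hs⟩ := hv
  set y := G.nbr (i - 1) v with hy
  have hvy : G.E (i - 1) v y := nbr_spec G hN
  obtain ⟨u, hyu, huv'⟩ :=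
    h5 (i - 1) j y v v' (Or.inl hj) ((hP _ _ _ hvy).1) he
  have hv'u : G.E (i - 1) v' u := (hP _ _ _ huv').1
  have hNu : G.hasNbr (i - 1) v' := ⟨u, hv'u⟩
  have hnb : G.nbr (i - 1) v' = u :=
    nbr_eq G hv'u (fun z hz => uniq1 hP hAll hv'u hz)
  have hsv : G.sgn v' (i - 1 - 2) = G.sgn v (i - 1 - 2) :=
    (h2 j v v' he).2.2 (i - 1 - 2) (Or.inl (by omega))
  have hsu : G.sgn u (i - 1 - 2) = G.sgn y (i - 1 - 2) :=
    (h2 j y u hyu).2.2 (i - 1 - 2) (Or.inl (by omega))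
  exact ⟨hNu, by rw [hnb, hsv, hsu, hs]⟩

/-- Low edges commute past high reflexive-transitive chains. -/
lemma commute (h5 : G.Ax5) {m v v' : G.V} {j : ℕ} (hjl : j + 3 ≤ i - 1)
    (hh : Relation.ReflTransGen (fun a b => ∃ k, i - 1 + 3 ≤ k ∧ G.E k a b) m v)
    (he : G.E j v v') :
    ∃ m', G.E j m m' ∧
      Relation.ReflTransGen (fun a b => ∃ k, i - 1 + 3 ≤ k ∧ G.E k a b) m' v' := by
  induction hh generalizing v' with
  | refl => exact ⟨v', he, Relation.ReflTransGen.refl⟩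
  | tail _ hs ih =>
    obtain ⟨k, hk, hek⟩ := hs
    obtain ⟨t, hjt, hkt⟩ := h5 k j _ _ _ (Or.inr (by omega)) hek he
    obtain ⟨m', hjm, hrt⟩ := ih hjt
    exact ⟨m', hjm, hrt.tail ⟨k, hk, hkt⟩⟩

/-- Decompose a package path into low edges followed by high edges. -/
lemma decomp (h5 : G.Ax5) {w v : G.V}
    (h : Relation.ReflTransGen
      (fun a b => ∃ k, (k + 3 ≤ i - 1 ∨ i - 1 + 3 ≤ k) ∧ G.E k a b) w v) :
    ∃ m, Relation.ReflTransGen (fun a b => ∃ k, k + 3 ≤ i - 1 ∧ G.E k a b) w m ∧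
      Relation.ReflTransGen (fun a b => ∃ k, i - 1 + 3 ≤ k ∧ G.E k a b) m v := by
  induction h with
  | refl => exact ⟨w, Relation.ReflTransGen.refl, Relation.ReflTransGen.refl⟩
  | tail _ hs ih =>
    obtain ⟨m, hl, hh⟩ := ih
    obtain ⟨k, hk | hk, hek⟩ := hs
    · obtain ⟨m', hjm, hrt⟩ := commute h5 hk hh hek
      exact ⟨m', hl.tail ⟨k, hk, hjm⟩, hrt⟩
    · exact ⟨m, hl, hh.tail ⟨k, hk, hek⟩⟩

end Main
end SCG10Aux

/-- If every component of `E_{i-2} ∪ E_{i-1}` is allowed, then `W_i^0(G) = W_i(G)`. -/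
theorem statement10 (n N i : ℕ) (hi : 3 < i) (hin : i < n) (G : SCG n N)
    (hP : G.Proper) (h1 : G.Ax1) (h2 : G.Ax2) (h3 : G.Ax3) (h5 : G.Ax5)
    (hAll : G.Allowed2 (i - 1)) :
    G.W0set i = G.Wset i := by
  classical
  ext w
  constructor
  · exact fun h => h.1
  · intro hw
    refine ⟨hw, ?_⟩
    intro v hv
    obtain ⟨hwi, ⟨hwN, hwsgn⟩, hne⟩ := hw
    have hv' : Relation.ReflTransGen
        (fun a b => ∃ k, (k + 3 ≤ i - 1 ∨ i - 1 + 3 ≤ k) ∧ G.E k a b) w v := hv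
    obtain ⟨m, hl, hh⟩ := SCG10Aux.decomp h5 hv'
    have hm : G.hasNbr (i - 1) m ∧ G.sgn m i = !G.sgn (G.nbr (i - 1) m) i :=
      SCG10Aux.rtg_invariant
        (P := fun z => G.hasNbr (i - 1) z ∧ G.sgn z i = !G.sgn (G.nbr (i - 1) z) i)
        (fun a b hr hp => by
          obtain ⟨k, hk, hek⟩ := hr
          exact SCG10Aux.typeW_step hi hP h2 h5 hAll hk hek hp)
        hl ⟨hwN, hwsgn⟩
    have hmf : G.FlatEdge (i - 1) m := SCG10Aux.typeW_flat hi hin hP h1 h2 hAll hm.1 hm.2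
    exact SCG10Aux.rtg_invariant
      (P := fun z => G.FlatEdge (i - 1) z)
      (fun a b hr hp => by
        obtain ⟨k, hk, hek⟩ := hr
        exact SCG10Aux.flat_step hi hP h2 h5 hAll hk hek hp)
      hh hmf
end

section
/- Let G be a dual equivalence graph of type (n,N) (axioms 1–6). For any 3 ≤ i ≤ n with i < N, every non-flat i-chain in G has length at most 2, and every flat i-chain in G has length at most 4; moreover a flat i-chain of length 4 forms a cycle: its first and last vertices are joined by an (i-2)-edge. -/
open Finset

section Helpers

lemma pigeon2 {α : Type*} {a b v0 v1 v2 : α}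
    (h0 : v0 = a ∨ v0 = b) (h1 : v1 = a ∨ v1 = b) (h2 : v2 = a ∨ v2 = b)
    (n01 : v0 ≠ v1) (n02 : v0 ≠ v2) (n12 : v1 ≠ v2) : False := by
  rcases h0 with rfl | rfl <;> rcases h1 with rfl | rfl <;> rcases h2 with rfl | rfl <;>
    simp_all

lemma pigeon3 {α : Type*} {a b c v0 v1 v2 v3 : α}
    (h0 : v0 = a ∨ v0 = b ∨ v0 = c) (h1 : v1 = a ∨ v1 = b ∨ v1 = c)
    (h2 : v2 = a ∨ v2 = b ∨ v2 = c) (h3 : v3 = a ∨ v3 = b ∨ v3 = c)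
    (n01 : v0 ≠ v1) (n02 : v0 ≠ v2) (n03 : v0 ≠ v3)
    (n12 : v1 ≠ v2) (n13 : v1 ≠ v3) (n23 : v2 ≠ v3) : False := by
  rcases h0 with rfl | rfl | rfl <;> rcases h1 with rfl | rfl | rfl <;>
    rcases h2 with rfl | rfl | rfl <;> rcases h3 with rfl | rfl | rfl <;> simp_all

lemma pigeon4 {α : Type*} {a b c d v0 v1 v2 v3 v4 : α}
    (h0 : v0 = a ∨ v0 = b ∨ v0 = c ∨ v0 = d)
    (h1 : v1 = a ∨ v1 = b ∨ v1 = c ∨ v1 = d)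
    (h2 : v2 = a ∨ v2 = b ∨ v2 = c ∨ v2 = d)
    (h3 : v3 = a ∨ v3 = b ∨ v3 = c ∨ v3 = d)
    (h4 : v4 = a ∨ v4 = b ∨ v4 = c ∨ v4 = d)
    (n01 : v0 ≠ v1) (n02 : v0 ≠ v2) (n03 : v0 ≠ v3) (n04 : v0 ≠ v4)
    (n12 : v1 ≠ v2) (n13 : v1 ≠ v3) (n14 : v1 ≠ v4)
    (n23 : v2 ≠ v3) (n24 : v2 ≠ v4) (n34 : v3 ≠ v4) : False := by
  classical
  have key : ∀ x : α, (x = a ∨ x = b ∨ x = c ∨ x = d) → x ∈ ({a, b, c, d} : Finset α) := by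
    intro t ht
    simp only [Finset.mem_insert, Finset.mem_singleton]
    tauto
  have hsub : ({v0, v1, v2, v3, v4} : Finset α) ⊆ {a, b, c, d} := by
    intro t ht
    simp only [Finset.mem_insert, Finset.mem_singleton] at ht
    rcases ht with rfl | rfl | rfl | rfl | rfl
    exacts [key _ h0, key _ h1, key _ h2, key _ h3, key _ h4]
  have hcard : ({v0, v1, v2, v3, v4} : Finset α).card = 5 := by
    rw [Finset.card_insert_of_notMem (by simp [n01, n02, n03, n04]),
      Finset.card_insert_of_notMem (by simp [n12, n13, n14]),
      Finset.card_insert_of_notMem (by simp [n23, n24]),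
      Finset.card_insert_of_notMem (by simp [n34]), Finset.card_singleton]
  have hle4 : ({a, b, c, d} : Finset α).card ≤ 4 := by
    have t1 := Finset.card_insert_le a ({b, c, d} : Finset α)
    have t2 := Finset.card_insert_le b ({c, d} : Finset α)
    have t3 := Finset.card_insert_le c ({d} : Finset α)
    have t4 : ({d} : Finset α).card = 1 := Finset.card_singleton d
    omega
  have := Finset.card_le_card hsub
  omega

lemma iter3 {α : Type*} (f : α → α) (a b c : α) (h1 : f a = b) (h2 : f b = c)
    (h3 : f c = a) : ∀ m, f^[m] a = a ∨ f^[m] a = b ∨ f^[m] a = c := by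
  intro m
  induction m with
  | zero => left; rfl
  | succ m ih =>
      rw [Function.iterate_succ_apply']
      rcases ih with h | h | h <;> simp [h, h1, h2, h3]

namespace SCG

variable {n N : ℕ} {G : SCG n N}

lemma nbr_edge {j : ℕ} {v : G.V} (h : G.hasNbr j v) : G.E j v (G.nbr j v) := by
  unfold nbr
  rw [dif_pos h]
  exact h.choose_spec

lemma nbr_no {j : ℕ} {v : G.V} (h : ¬G.hasNbr j v) : G.nbr j v = v := by
  unfold nbr
  rw [dif_neg h]

lemma nbr_eq {j : ℕ} {v u : G.V} (hu : ∀ a b, G.E j v a → G.E j v b → a = b)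
    (e : G.E j v u) : G.nbr j v = u :=
  hu _ _ (nbr_edge ⟨u, e⟩) e

lemma mem_comp_self (S : Set ℕ) (v : G.V) : v ∈ G.Comp S v := Relation.ReflTransGen.refl

lemma comp_tail {S : Set ℕ} {v a b : G.V} {j : ℕ} (ha : a ∈ G.Comp S v) (hj : j ∈ S)
    (e : G.E j a b) : b ∈ G.Comp S v := Relation.ReflTransGen.tail ha ⟨j, hj, e⟩

lemma comp_nbr {S : Set ℕ} {v a : G.V} {j : ℕ} (ha : a ∈ G.Comp S v) (hj : j ∈ S) :
    G.nbr j a ∈ G.Comp S v := by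
  by_cases h : G.hasNbr j a
  · exact comp_tail ha hj (nbr_edge h)
  · rwa [nbr_no h]

lemma comp_iter {i : ℕ} {v a : G.V} (ha : a ∈ G.Comp (Set.Icc (i - 2) i) v) (m : ℕ) :
    (G.stepWD i)^[m] a ∈ G.Comp (Set.Icc (i - 2) i) v := by
  induction m with
  | zero => simpa
  | succ m ih =>
      rw [Function.iterate_succ_apply']
      exact comp_nbr (comp_nbr ih (by simp only [Set.mem_Icc]; omega)) (by simp only [Set.mem_Icc]; omega)

lemma uniq_top (hp : G.Proper) {k : ℕ} (hA : G.Allowed2 k) :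
    ∀ v a b : G.V, G.E k v a → G.E k v b → a = b := by
  intro v a b ea eb
  have hk : k ∈ ({k - 1, k} : Set ℕ) := Set.mem_insert_of_mem _ rfl
  have mv : v ∈ G.Comp {k - 1, k} v := mem_comp_self _ _
  have ma : a ∈ G.Comp {k - 1, k} v := comp_tail mv hk ea
  have mb : b ∈ G.Comp {k - 1, k} v := comp_tail mv hk eb
  rcases hA v with h1 | ⟨a', b', c', e1, e2, hcomp, hna, hnc⟩ | ⟨a', b', e1, e2, hcomp⟩
  · rw [h1, Set.mem_singleton_iff] at ma
    exact absurd ma.symm (hp k v a ea).2.1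
  · rw [hcomp] at mv ma mb
    simp only [Set.mem_insert_iff, Set.mem_singleton_iff] at mv ma mb
    have key : ∀ t : G.V, G.E k v t → (t = a' ∨ t = b' ∨ t = c') →
        (v = b' → t = c') ∧ (v = c' → t = b') := by
      intro t et ht
      constructor
      · intro hv
        rcases ht with h' | h' | h'
        · exact absurd ⟨v, h' ▸ (hp k v t et).1⟩ hna
        · exact absurd (hv.trans h'.symm) (hp k v t et).2.1
        · exact h'
      · intro hv
        rcases ht with h' | h' | h'
        · exact absurd ⟨v, h' ▸ (hp k v t et).1⟩ hna
        · exact h'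
        · exact absurd (hv.trans h'.symm) (hp k v t et).2.1
    rcases mv with hv | hv | hv
    · exact absurd ⟨a, hv ▸ ea⟩ hna
    · rw [(key a ea ma).1 hv, (key b eb mb).1 hv]
    · rw [(key a ea ma).2 hv, (key b eb mb).2 hv]
  · rw [hcomp] at mv ma mb
    simp only [Set.mem_insert_iff, Set.mem_singleton_iff] at mv ma mb
    rcases mv with hv | hv
    · rcases ma with ha2 | ha2
      · exact absurd (hv.trans ha2.symm) (hp k v a ea).2.1
      · rcases mb with hb2 | hb2
        · exact absurd (hv.trans hb2.symm) (hp k v b eb).2.1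
        · exact ha2.trans hb2.symm
    · rcases ma with ha2 | ha2
      · rcases mb with hb2 | hb2
        · exact ha2.trans hb2.symm
        · exact absurd (hv.trans hb2.symm) (hp k v b eb).2.1
      · exact absurd (hv.trans ha2.symm) (hp k v a ea).2.1

lemma uniq_bot (hp : G.Proper) {k : ℕ} (hA : G.Allowed2 k) :
    ∀ v a b : G.V, G.E (k - 1) v a → G.E (k - 1) v b → a = b := by
  intro v a b ea eb
  have hk : k - 1 ∈ ({k - 1, k} : Set ℕ) := Set.mem_insert _ _
  have mv : v ∈ G.Comp {k - 1, k} v := mem_comp_self _ _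
  have ma : a ∈ G.Comp {k - 1, k} v := comp_tail mv hk ea
  have mb : b ∈ G.Comp {k - 1, k} v := comp_tail mv hk eb
  rcases hA v with h1 | ⟨a', b', c', e1, e2, hcomp, hna, hnc⟩ | ⟨a', b', e1, e2, hcomp⟩
  · rw [h1, Set.mem_singleton_iff] at ma
    exact absurd ma.symm (hp _ v a ea).2.1
  · rw [hcomp] at mv ma mb
    simp only [Set.mem_insert_iff, Set.mem_singleton_iff] at mv ma mb
    have key : ∀ t : G.V, G.E (k - 1) v t → (t = a' ∨ t = b' ∨ t = c') →
        (v = a' → t = b') ∧ (v = b' → t = a') := by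
      intro t et ht
      constructor
      · intro hv
        rcases ht with h' | h' | h'
        · exact absurd (hv.trans h'.symm) (hp _ v t et).2.1
        · exact h'
        · exact absurd ⟨v, h' ▸ (hp _ v t et).1⟩ hnc
      · intro hv
        rcases ht with h' | h' | h'
        · exact h'
        · exact absurd (hv.trans h'.symm) (hp _ v t et).2.1
        · exact absurd ⟨v, h' ▸ (hp _ v t et).1⟩ hnc
    rcases mv with hv | hv | hv
    · rw [(key a ea ma).1 hv, (key b eb mb).1 hv]
    · rw [(key a ea ma).2 hv, (key b eb mb).2 hv]
    · exact absurd ⟨a, hv ▸ ea⟩ hnc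
  · rw [hcomp] at mv ma mb
    simp only [Set.mem_insert_iff, Set.mem_singleton_iff] at mv ma mb
    rcases mv with hv | hv
    · rcases ma with ha2 | ha2
      · exact absurd (hv.trans ha2.symm) (hp _ v a ea).2.1
      · rcases mb with hb2 | hb2
        · exact absurd (hv.trans hb2.symm) (hp _ v b eb).2.1
        · exact ha2.trans hb2.symm
    · rcases ma with ha2 | ha2
      · rcases mb with hb2 | hb2
        · exact ha2.trans hb2.symm
        · exact absurd (hv.trans hb2.symm) (hp _ v b eb).2.1
      · exact absurd (hv.trans ha2.symm) (hp _ v a ea).2.1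

end SCG

end Helpers

open SCG

/-- In a dual equivalence graph, non-flat `i`-chains have length at most 2, flat
`i`-chains have length at most 4, and a flat `i`-chain of length 4 forms a cycle. -/
theorem statement11 (n N : ℕ) (G : SCG n N) (hd : G.IsDEG)
    (i : ℕ) (h3 : 3 ≤ i) (hn : i ≤ n) (hN : i < N) :
    (∀ (h : ℕ) (w : ℕ → G.V), G.IsNonflatChain i h w → h ≤ 1) ∧
    (∀ (h : ℕ) (x : ℕ → G.V), G.IsFlatChain i h x → h ≤ 2) ∧
    (∀ x : ℕ → G.V, G.IsFlatChain i 2 x → G.E (i - 2) (x 0) (x 3)) := by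
  obtain ⟨-, hp, -, -, -, ⟨hA2, hA3⟩, -, -⟩ := hd
  refine ⟨?_, ?_, ?_⟩
  · -- non-flat chains have h ≤ 1
    intro h w hc
    by_contra hh
    obtain ⟨hdist, hei, hei1⟩ := hc
    have h2 : 2 ≤ h := by omega
    have e01 : G.E i (w 0) (w 1) := by simpa using hei 0 (by omega)
    have e12 : G.E (i - 1) (w 1) (w 2) := by simpa using hei1 0 (by omega)
    have e23 : G.E i (w 2) (w 3) := by simpa using hei 1 (by omega)
    have hin : i < n := (hp i _ _ e01).2.2.2
    have hiS : i ∈ ({i - 1, i} : Set ℕ) := Set.mem_insert_of_mem _ rfl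
    have hi1S : i - 1 ∈ ({i - 1, i} : Set ℕ) := Set.mem_insert _ _
    have m0 := mem_comp_self ({i - 1, i} : Set ℕ) (w 0)
    have m1 := comp_tail m0 hiS e01
    have m2 := comp_tail m1 hi1S e12
    have m3 := comp_tail m2 hiS e23
    rcases hA2 i (by omega) hin (w 0) with h1 | ⟨a, b, c, -, -, hcomp, -, -⟩ |
      ⟨a, b, -, -, hcomp⟩
    · rw [h1, Set.mem_singleton_iff] at m1
      exact hdist 1 (by omega) 0 (by omega) (by omega) m1
    · rw [hcomp] at m0 m1 m2 m3
      simp only [Set.mem_insert_iff, Set.mem_singleton_iff] at m0 m1 m2 m3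
      exact pigeon3 m0 m1 m2 m3
        (hdist 0 (by omega) 1 (by omega) (by omega))
        (hdist 0 (by omega) 2 (by omega) (by omega))
        (hdist 0 (by omega) 3 (by omega) (by omega))
        (hdist 1 (by omega) 2 (by omega) (by omega))
        (hdist 1 (by omega) 3 (by omega) (by omega))
        (hdist 2 (by omega) 3 (by omega) (by omega))
    · rw [hcomp] at m0 m1 m2
      simp only [Set.mem_insert_iff, Set.mem_singleton_iff] at m0 m1 m2
      exact pigeon2 m0 m1 m2
        (hdist 0 (by omega) 1 (by omega) (by omega))
        (hdist 0 (by omega) 2 (by omega) (by omega))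
        (hdist 1 (by omega) 2 (by omega) (by omega))
  · -- flat chains have h ≤ 2
    intro h x hc
    by_contra hh
    obtain ⟨hdist, hnb, hei, hst⟩ := hc
    have h6 : 3 ≤ h := by omega
    have e01 : G.E i (x 0) (x 1) := by simpa using hei 0 (by omega)
    have e23 : G.E i (x 2) (x 3) := by simpa using hei 1 (by omega)
    obtain ⟨mA, -, hx2⟩ := hst 0 (by omega)
    obtain ⟨mB, -, hx4⟩ := hst 1 (by omega)
    norm_num at hx2 hx4
    have hi4 : 4 ≤ i := by
      obtain ⟨u, hu⟩ := hnb 0 (by omega)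
      have := (hp _ _ _ hu).2.2.1
      omega
    have hin : i < n := (hp i _ _ e01).2.2.2
    have hi2S : i - 2 ∈ Set.Icc (i - 2) i := by simp only [Set.mem_Icc]; omega
    have hiS : i ∈ Set.Icc (i - 2) i := by simp only [Set.mem_Icc]; omega
    have m0 := mem_comp_self (Set.Icc (i - 2) i) (x 0)
    have m1 := comp_tail m0 hiS e01
    have m2 : x 2 ∈ G.Comp (Set.Icc (i - 2) i) (x 0) := by
      rw [hx2]; exact comp_nbr (comp_iter m1 mA) hi2S
    have m3 := comp_tail m2 hiS e23
    have m4 : x 4 ∈ G.Comp (Set.Icc (i - 2) i) (x 0) := by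
      rw [hx4]; exact comp_nbr (comp_iter m3 mB) hi2S
    rcases hA3 i (by omega) hin (x 0) with h1 |
      ⟨a, b, c, d, -, -, -, hcomp, -, -, -, hnc2, hnd2, -⟩ |
      ⟨a, b, c, d, e5, -, -, -, -, -, -, hcomp, -, -, hne2⟩ |
      ⟨u, p, w, xx, y, z, -, -, -, -, -, -, hcomp, hnu2, -, -, -, hnz2, -⟩
    · rw [h1, Set.mem_singleton_iff] at m1
      exact hdist 1 (by omega) 0 (by omega) (by omega) m1
    · rw [hcomp] at m0 m1 m2
      simp only [Set.mem_insert_iff, Set.mem_singleton_iff] at m0 m1 m2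
      have nc : ∀ j, j < 2 * h → x j ≠ c := fun j hj hh => hnc2 (hh ▸ hnb j hj)
      have nd : ∀ j, j < 2 * h → x j ≠ d := fun j hj hh => hnd2 (hh ▸ hnb j hj)
      have r0 : x 0 = a ∨ x 0 = b := by
        rcases m0 with h' | h' | h' | h'
        exacts [Or.inl h', Or.inr h', absurd h' (nc 0 (by omega)), absurd h' (nd 0 (by omega))]
      have r1 : x 1 = a ∨ x 1 = b := by
        rcases m1 with h' | h' | h' | h'
        exacts [Or.inl h', Or.inr h', absurd h' (nc 1 (by omega)), absurd h' (nd 1 (by omega))]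
      have r2 : x 2 = a ∨ x 2 = b := by
        rcases m2 with h' | h' | h' | h'
        exacts [Or.inl h', Or.inr h', absurd h' (nc 2 (by omega)), absurd h' (nd 2 (by omega))]
      exact pigeon2 r0 r1 r2
        (hdist 0 (by omega) 1 (by omega) (by omega))
        (hdist 0 (by omega) 2 (by omega) (by omega))
        (hdist 1 (by omega) 2 (by omega) (by omega))
    · rw [hcomp] at m0 m1 m2 m3 m4
      simp only [Set.mem_insert_iff, Set.mem_singleton_iff] at m0 m1 m2 m3 m4
      have ne5 : ∀ j, j < 2 * h → x j ≠ e5 := fun j hj hh => hne2 (hh ▸ hnb j hj)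
      have red : ∀ j, j < 2 * h →
          (x j = a ∨ x j = b ∨ x j = c ∨ x j = d ∨ x j = e5) →
          (x j = a ∨ x j = b ∨ x j = c ∨ x j = d) := by
        intro j hj hm
        rcases hm with h' | h' | h' | h' | h'
        exacts [Or.inl h', Or.inr (Or.inl h'), Or.inr (Or.inr (Or.inl h')),
          Or.inr (Or.inr (Or.inr h')), absurd h' (ne5 j hj)]
      exact pigeon4 (red 0 (by omega) m0) (red 1 (by omega) m1) (red 2 (by omega) m2)
        (red 3 (by omega) m3) (red 4 (by omega) m4)
        (hdist 0 (by omega) 1 (by omega) (by omega))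
        (hdist 0 (by omega) 2 (by omega) (by omega))
        (hdist 0 (by omega) 3 (by omega) (by omega))
        (hdist 0 (by omega) 4 (by omega) (by omega))
        (hdist 1 (by omega) 2 (by omega) (by omega))
        (hdist 1 (by omega) 3 (by omega) (by omega))
        (hdist 1 (by omega) 4 (by omega) (by omega))
        (hdist 2 (by omega) 3 (by omega) (by omega))
        (hdist 2 (by omega) 4 (by omega) (by omega))
        (hdist 3 (by omega) 4 (by omega) (by omega))
    · rw [hcomp] at m0 m1 m2 m3 m4
      simp only [Set.mem_insert_iff, Set.mem_singleton_iff] at m0 m1 m2 m3 m4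
      have nu : ∀ j, j < 2 * h → x j ≠ u := fun j hj hh => hnu2 (hh ▸ hnb j hj)
      have nz : ∀ j, j < 2 * h → x j ≠ z := fun j hj hh => hnz2 (hh ▸ hnb j hj)
      have red : ∀ j, j < 2 * h →
          (x j = u ∨ x j = p ∨ x j = w ∨ x j = xx ∨ x j = y ∨ x j = z) →
          (x j = p ∨ x j = w ∨ x j = xx ∨ x j = y) := by
        intro j hj hm
        rcases hm with h' | h' | h' | h' | h' | h'
        exacts [absurd h' (nu j hj), Or.inl h', Or.inr (Or.inl h'),
          Or.inr (Or.inr (Or.inl h')), Or.inr (Or.inr (Or.inr h')), absurd h' (nz j hj)]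
      exact pigeon4 (red 0 (by omega) m0) (red 1 (by omega) m1) (red 2 (by omega) m2)
        (red 3 (by omega) m3) (red 4 (by omega) m4)
        (hdist 0 (by omega) 1 (by omega) (by omega))
        (hdist 0 (by omega) 2 (by omega) (by omega))
        (hdist 0 (by omega) 3 (by omega) (by omega))
        (hdist 0 (by omega) 4 (by omega) (by omega))
        (hdist 1 (by omega) 2 (by omega) (by omega))
        (hdist 1 (by omega) 3 (by omega) (by omega))
        (hdist 1 (by omega) 4 (by omega) (by omega))
        (hdist 2 (by omega) 3 (by omega) (by omega))
        (hdist 2 (by omega) 4 (by omega) (by omega))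
        (hdist 3 (by omega) 4 (by omega) (by omega))
  · -- a flat chain of length 4 is a cycle
    intro x hc
    obtain ⟨hdist, hnb, hei, hst⟩ := hc
    have e01 : G.E i (x 0) (x 1) := by simpa using hei 0 (by omega)
    have e23 : G.E i (x 2) (x 3) := by simpa using hei 1 (by omega)
    obtain ⟨mA, -, hx2⟩ := hst 0 (by omega)
    norm_num at hx2
    have hi4 : 4 ≤ i := by
      obtain ⟨u, hu⟩ := hnb 0 (by omega)
      have := (hp _ _ _ hu).2.2.1
      omega
    have hin : i < n := (hp i _ _ e01).2.2.2
    have uI : ∀ v a b : G.V, G.E i v a → G.E i v b → a = b :=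
      uniq_top hp (hA2 i (by omega) hin)
    have uI1 : ∀ v a b : G.V, G.E (i - 1) v a → G.E (i - 1) v b → a = b :=
      uniq_bot hp (hA2 i (by omega) hin)
    have uI2 : ∀ v a b : G.V, G.E (i - 2) v a → G.E (i - 2) v b → a = b := by
      have h' := uniq_bot hp (hA2 (i - 1) (by omega) (by omega))
      have hieq : i - 1 - 1 = i - 2 := by omega
      rwa [hieq] at h'
    have hi2S : i - 2 ∈ Set.Icc (i - 2) i := by simp only [Set.mem_Icc]; omega
    have hiS : i ∈ Set.Icc (i - 2) i := by simp only [Set.mem_Icc]; omega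
    have m0 := mem_comp_self (Set.Icc (i - 2) i) (x 0)
    have m1 := comp_tail m0 hiS e01
    have m2 : x 2 ∈ G.Comp (Set.Icc (i - 2) i) (x 0) := by
      rw [hx2]; exact comp_nbr (comp_iter m1 mA) hi2S
    have m3 := comp_tail m2 hiS e23
    rcases hA3 i (by omega) hin (x 0) with h1 |
      ⟨a, b, c, d, -, -, -, hcomp, -, -, -, hnc2, hnd2, -⟩ |
      ⟨a, b, c, d, e5, -, -, ebc, -, -, ede, hcomp, hna, -, hne2⟩ |
      ⟨u, p, w, xx, y, z, eup, epw, epx, ewy, exy, eyz, hcomp, hnu2, -, hnw1, hnx1, hnz2, -⟩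
    · rw [h1, Set.mem_singleton_iff] at m1
      exact absurd m1 (hdist 1 (by omega) 0 (by omega) (by omega))
    · rw [hcomp] at m0 m1 m2
      simp only [Set.mem_insert_iff, Set.mem_singleton_iff] at m0 m1 m2
      have nc : ∀ j, j < 4 → x j ≠ c := fun j hj hh => hnc2 (hh ▸ hnb j (by omega))
      have nd : ∀ j, j < 4 → x j ≠ d := fun j hj hh => hnd2 (hh ▸ hnb j (by omega))
      have r0 : x 0 = a ∨ x 0 = b := by
        rcases m0 with h' | h' | h' | h'
        exacts [Or.inl h', Or.inr h', absurd h' (nc 0 (by omega)), absurd h' (nd 0 (by omega))]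
      have r1 : x 1 = a ∨ x 1 = b := by
        rcases m1 with h' | h' | h' | h'
        exacts [Or.inl h', Or.inr h', absurd h' (nc 1 (by omega)), absurd h' (nd 1 (by omega))]
      have r2 : x 2 = a ∨ x 2 = b := by
        rcases m2 with h' | h' | h' | h'
        exacts [Or.inl h', Or.inr h', absurd h' (nc 2 (by omega)), absurd h' (nd 2 (by omega))]
      exact (pigeon2 r0 r1 r2
        (hdist 0 (by omega) 1 (by omega) (by omega))
        (hdist 0 (by omega) 2 (by omega) (by omega))
        (hdist 1 (by omega) 2 (by omega) (by omega))).elim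
    · rw [hcomp] at m0 m1 m2
      simp only [Set.mem_insert_iff, Set.mem_singleton_iff] at m0 m1 m2
      have ne5 : ∀ j, j < 4 → x j ≠ e5 := fun j hj hh => hne2 (hh ▸ hnb j (by omega))
      have n0a : x 0 ≠ a := fun hh => hna ⟨x 1, hh ▸ e01⟩
      have n0d : x 0 ≠ d := fun hh =>
        (ne5 1 (by omega)) (uI _ _ _ e01 (show G.E i (x 0) e5 by rw [hh]; exact ede))
      have n2a : x 2 ≠ a := fun hh => hna ⟨x 3, hh ▸ e23⟩
      have n2d : x 2 ≠ d := fun hh =>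
        (ne5 3 (by omega)) (uI _ _ _ e23 (show G.E i (x 2) e5 by rw [hh]; exact ede))
      have r0 : x 0 = b ∨ x 0 = c := by
        rcases m0 with h' | h' | h' | h' | h'
        exacts [absurd h' n0a, Or.inl h', Or.inr h', absurd h' n0d,
          absurd h' (ne5 0 (by omega))]
      have r2 : x 2 = b ∨ x 2 = c := by
        rcases m2 with h' | h' | h' | h' | h'
        exacts [absurd h' n2a, Or.inl h', Or.inr h', absurd h' n2d,
          absurd h' (ne5 2 (by omega))]
      have r1 : x 1 = b ∨ x 1 = c := by
        rcases r0 with h' | h'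
        · exact Or.inr (uI _ _ _ e01 (show G.E i (x 0) c by rw [h']; exact ebc))
        · exact Or.inl (uI _ _ _ e01 (show G.E i (x 0) b by rw [h']; exact (hp _ _ _ ebc).1))
      exact (pigeon2 r0 r1 r2
        (hdist 0 (by omega) 1 (by omega) (by omega))
        (hdist 0 (by omega) 2 (by omega) (by omega))
        (hdist 1 (by omega) 2 (by omega) (by omega))).elim
    · rw [hcomp] at m0
      simp only [Set.mem_insert_iff, Set.mem_singleton_iff] at m0
      have np2 : G.nbr (i - 2) p = w := nbr_eq (uI2 p) epw
      have nw2 : G.nbr (i - 2) w = p := nbr_eq (uI2 w) (hp _ _ _ epw).1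
      have nx2 : G.nbr (i - 2) xx = y := nbr_eq (uI2 xx) exy
      have ny2 : G.nbr (i - 2) y = xx := nbr_eq (uI2 y) (hp _ _ _ exy).1
      have nu2' : G.nbr (i - 2) u = u := nbr_no hnu2
      have nz2' : G.nbr (i - 2) z = z := nbr_no hnz2
      have np1 : G.nbr (i - 1) p = u := nbr_eq (uI1 p) (hp _ _ _ eup).1
      have nu1 : G.nbr (i - 1) u = p := nbr_eq (uI1 u) eup
      have ny1 : G.nbr (i - 1) y = z := nbr_eq (uI1 y) eyz
      have nz1 : G.nbr (i - 1) z = y := nbr_eq (uI1 z) (hp _ _ _ eyz).1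
      have nw1' : G.nbr (i - 1) w = w := nbr_no hnw1
      have nx1' : G.nbr (i - 1) xx = xx := nbr_no hnx1
      have sp : G.stepWD i p = w := by simp [SCG.stepWD, np2, nw1']
      have sw : G.stepWD i w = u := by simp [SCG.stepWD, nw2, np1]
      have su : G.stepWD i u = p := by simp [SCG.stepWD, nu2', nu1]
      have sx : G.stepWD i xx = z := by simp [SCG.stepWD, nx2, ny1]
      have sz : G.stepWD i z = y := by simp [SCG.stepWD, nz2', nz1]
      have sy : G.stepWD i y = xx := by simp [SCG.stepWD, ny2, nx1']
      have nu : x 0 ≠ u := fun hh => hnu2 (hh ▸ hnb 0 (by omega))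
      have nz : x 0 ≠ z := fun hh => hnz2 (hh ▸ hnb 0 (by omega))
      have r0 : x 0 = p ∨ x 0 = w ∨ x 0 = xx ∨ x 0 = y := by
        rcases m0 with h' | h' | h' | h' | h' | h'
        exacts [absurd h' nu, Or.inl h', Or.inr (Or.inl h'),
          Or.inr (Or.inr (Or.inl h')), Or.inr (Or.inr (Or.inr h')), absurd h' nz]
      have d12 : x 1 ≠ x 2 := hdist 1 (by omega) 2 (by omega) (by omega)
      rcases r0 with h0 | h0 | h0 | h0
      · -- x0 = p, x1 = xx
        have hx1 : x 1 = xx := uI _ _ _ e01 (show G.E i (x 0) xx by rw [h0]; exact epx)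
        rw [hx1] at hx2
        rcases iter3 (G.stepWD i) xx z y sx sz sy mA with hv | hv | hv <;> rw [hv] at hx2
        · rw [nx2] at hx2
          have hx3 : x 3 = w :=
            uI _ _ _ e23 (show G.E i (x 2) w by rw [hx2]; exact (hp _ _ _ ewy).1)
          rw [h0, hx3]; exact epw
        · rw [nz2'] at hx2
          exact absurd (hx2 ▸ hnb 2 (by omega)) hnz2
        · rw [ny2] at hx2
          exact absurd (hx1.trans hx2.symm) d12
      · -- x0 = w, x1 = y
        have hx1 : x 1 = y := uI _ _ _ e01 (show G.E i (x 0) y by rw [h0]; exact ewy)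
        rw [hx1] at hx2
        rcases iter3 (G.stepWD i) y xx z sy sx sz mA with hv | hv | hv <;> rw [hv] at hx2
        · rw [ny2] at hx2
          have hx3 : x 3 = p :=
            uI _ _ _ e23 (show G.E i (x 2) p by rw [hx2]; exact (hp _ _ _ epx).1)
          rw [h0, hx3]; exact (hp _ _ _ epw).1
        · rw [nx2] at hx2
          exact absurd (hx1.trans hx2.symm) d12
        · rw [nz2'] at hx2
          exact absurd (hx2 ▸ hnb 2 (by omega)) hnz2
      · -- x0 = xx, x1 = p
        have hx1 : x 1 = p := uI _ _ _ e01 (show G.E i (x 0) p by rw [h0]; exact (hp _ _ _ epx).1)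
        rw [hx1] at hx2
        rcases iter3 (G.stepWD i) p w u sp sw su mA with hv | hv | hv <;> rw [hv] at hx2
        · rw [np2] at hx2
          have hx3 : x 3 = y :=
            uI _ _ _ e23 (show G.E i (x 2) y by rw [hx2]; exact ewy)
          rw [h0, hx3]; exact exy
        · rw [nw2] at hx2
          exact absurd (hx1.trans hx2.symm) d12
        · rw [nu2'] at hx2
          exact absurd (hx2 ▸ hnb 2 (by omega)) hnu2
      · -- x0 = y, x1 = w
        have hx1 : x 1 = w := uI _ _ _ e01 (show G.E i (x 0) w by rw [h0]; exact (hp _ _ _ ewy).1)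
        rw [hx1] at hx2
        rcases iter3 (G.stepWD i) w u p sw su sp mA with hv | hv | hv <;> rw [hv] at hx2
        · rw [nw2] at hx2
          have hx3 : x 3 = xx :=
            uI _ _ _ e23 (show G.E i (x 2) xx by rw [hx2]; exact epx)
          rw [h0, hx3]; exact (hp _ _ _ exy).1
        · rw [nu2'] at hx2
          exact absurd (hx2 ▸ hnb 2 (by omega)) hnu2
        · rw [np2] at hx2
          exact absurd (hx1.trans hx2.symm) d12
end

section
/- Let G be a connected signed colored graph of degree 5 satisfying axioms 1, 2, 3, and 5 with LSP_5 and LSF_4. If G contains a vertex u admitting a 2-edge but neither a 3-edge nor a 4-edge, then the quasisymmetric generating function of G equals s_{(4,1)} or s_{(2,1,1,1)}; in particular G has exactly 4 vertices. -/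
open Finset

section AuxYoung

instance (μ : YoungDiagram) : Fintype (SYT μ) := by unfold SYT; infer_instance
instance (μ : YoungDiagram) : DecidableEq (SYT μ) := by unfold SYT; infer_instance

lemma rowLen_bound4 {μ : YoungDiagram} (h4 : μ.card = 4) {c : ℕ × ℕ} (hc : c ∈ μ.cells) :
    c.1 < 4 := by
  by_contra hi
  push_neg at hi
  have hsub : (Finset.range (c.1+1)).image (fun a => (a, (0:ℕ))) ⊆ μ.cells := by
    intro p hp
    simp only [Finset.mem_image, Finset.mem_range] at hp
    obtain ⟨a, ha, rfl⟩ := hp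
    exact μ.up_left_mem (Nat.lt_succ_iff.mp ha) (Nat.zero_le _) hc
  have hcard := Finset.card_le_card hsub
  rw [Finset.card_image_of_injective _ (fun a b hab => by simpa using hab),
    Finset.card_range] at hcard
  rw [YoungDiagram.card] at h4
  omega

lemma card_eq_sum_rowLen4 {μ : YoungDiagram} (h4 : μ.card = 4) :
    μ.rowLen 0 + μ.rowLen 1 + μ.rowLen 2 + μ.rowLen 3 = 4 := by
  have := Finset.card_eq_sum_card_fiberwise (f := Prod.fst) (s := μ.cells)
    (t := Finset.range 4) (fun c hc => Finset.mem_range.mpr (rowLen_bound4 h4 hc))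
  rw [YoungDiagram.card] at h4
  rw [h4] at this
  have hrow : ∀ i, (μ.cells.filter fun c => c.1 = i).card = μ.rowLen i := by
    intro i; rw [μ.rowLen_eq_card]; rfl
  simp only [Finset.sum_range_succ, Finset.sum_range_zero, hrow] at this
  omega

lemma shape4 (μ : YoungDiagram) (h4 : μ.card = 4) :
    μ = YoungDiagram.ofRowLens [4] (by decide) ∨
    μ = YoungDiagram.ofRowLens [3,1] (by decide) ∨
    μ = YoungDiagram.ofRowLens [2,2] (by decide) ∨
    μ = YoungDiagram.ofRowLens [2,1,1] (by decide) ∨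
    μ = YoungDiagram.ofRowLens [1,1,1,1] (by decide) := by
  have hsum := card_eq_sum_rowLen4 h4
  have h01 := μ.rowLen_anti 0 1 (by omega)
  have h12 := μ.rowLen_anti 1 2 (by omega)
  have h23 := μ.rowLen_anti 2 3 (by omega)
  have hz : ∀ i, 4 ≤ i → μ.rowLen i = 0 := by
    intro i hi
    by_contra h
    have : (i, 0) ∈ μ := YoungDiagram.mem_iff_lt_rowLen.mpr (by omega)
    have := rowLen_bound4 h4 this
    simp at this; omega
  have key : ∀ i, (μ.rowLen i = if i = 0 then μ.rowLen 0 else if i = 1 then μ.rowLen 1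
      else if i = 2 then μ.rowLen 2 else if i = 3 then μ.rowLen 3 else 0) := by
    intro i
    split_ifs with a b c d <;> try (subst_vars; rfl)
    exact hz i (by omega)
  have hcases : (μ.rowLen 0 = 4 ∧ μ.rowLen 1 = 0 ∧ μ.rowLen 2 = 0 ∧ μ.rowLen 3 = 0) ∨
      (μ.rowLen 0 = 3 ∧ μ.rowLen 1 = 1 ∧ μ.rowLen 2 = 0 ∧ μ.rowLen 3 = 0) ∨
      (μ.rowLen 0 = 2 ∧ μ.rowLen 1 = 2 ∧ μ.rowLen 2 = 0 ∧ μ.rowLen 3 = 0) ∨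
      (μ.rowLen 0 = 2 ∧ μ.rowLen 1 = 1 ∧ μ.rowLen 2 = 1 ∧ μ.rowLen 3 = 0) ∨
      (μ.rowLen 0 = 1 ∧ μ.rowLen 1 = 1 ∧ μ.rowLen 2 = 1 ∧ μ.rowLen 3 = 1) := by
    omega
  have ext_eq : ∀ (L : List ℕ) (hL : L.SortedGE),
      (∀ i, (if h : i < L.length then L[i] else 0) =
        (if i = 0 then μ.rowLen 0 else if i = 1 then μ.rowLen 1
          else if i = 2 then μ.rowLen 2 else if i = 3 then μ.rowLen 3 else 0)) →
      μ = YoungDiagram.ofRowLens L hL := by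
    intro L hL hvals
    ext ⟨i, j⟩
    rw [YoungDiagram.mem_cells, YoungDiagram.mem_cells, YoungDiagram.mem_ofRowLens,
      YoungDiagram.mem_iff_lt_rowLen]
    simp only []
    have h1 := hvals i
    have h2 := key i
    constructor
    · intro hj
      have : i < L.length := by by_contra hh; simp [hh] at h1; omega
      refine ⟨this, ?_⟩
      simp only [dif_pos this] at h1
      omega
    · rintro ⟨hl, hj⟩
      rw [dif_pos hl] at h1
      omega
  rcases hcases with ⟨a,b,c,d⟩|⟨a,b,c,d⟩|⟨a,b,c,d⟩|⟨a,b,c,d⟩|⟨a,b,c,d⟩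
  · exact Or.inl (ext_eq _ _ (by intro i; rcases i with _|_|_|_|i <;> simp [a,b,c,d]))
  · exact Or.inr (Or.inl (ext_eq _ _ (by intro i; rcases i with _|_|_|_|i <;> simp [a,b,c,d])))
  · exact Or.inr (Or.inr (Or.inl (ext_eq _ _ (by intro i; rcases i with _|_|_|_|i <;> simp [a,b,c,d]))))
  · exact Or.inr (Or.inr (Or.inr (Or.inl (ext_eq _ _ (by intro i; rcases i with _|_|_|_|i <;> simp [a,b,c,d])))))
  · exact Or.inr (Or.inr (Or.inr (Or.inr (ext_eq _ _ (by intro i; rcases i with _|_|_|_|i <;> simp [a,b,c,d])))))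

lemma schur4_4 : schurFun 4 (YoungDiagram.ofRowLens [4] (by decide)) = fun s =>
    if s = ![true, true, true] then 1 else 0 := by
  funext s; rw [schurFun, Nat.card_eq_fintype_card]; revert s; decide

lemma schur4_31 : schurFun 4 (YoungDiagram.ofRowLens [3,1] (by decide)) = fun s =>
    if s = ![true,true,false] ∨ s = ![true,false,true] ∨ s = ![false,true,true]
    then 1 else 0 := by
  funext s; rw [schurFun, Nat.card_eq_fintype_card]; revert s; decide

lemma schur4_22 : schurFun 4 (YoungDiagram.ofRowLens [2,2] (by decide)) = fun s =>
    if s = ![true,false,true] ∨ s = ![false,true,false] then 1 else 0 := by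
  funext s; rw [schurFun, Nat.card_eq_fintype_card]; revert s; decide

lemma schur4_211 : schurFun 4 (YoungDiagram.ofRowLens [2,1,1] (by decide)) = fun s =>
    if s = ![false,false,true] ∨ s = ![false,true,false] ∨ s = ![true,false,false]
    then 1 else 0 := by
  funext s; rw [schurFun, Nat.card_eq_fintype_card]; revert s; decide

lemma schur4_1111 : schurFun 4 (YoungDiagram.ofRowLens [1,1,1,1] (by decide)) = fun s =>
    if s = ![false,false,false] then 1 else 0 := by
  funext s; rw [schurFun, Nat.card_eq_fintype_card]; revert s; decide

lemma schur5_41 : schurFun 5 (YoungDiagram.ofRowLens [4,1] (by decide)) = fun s =>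
    if ∃ k : Fin 4, s = fun j => (if j = k then false else true) then 1 else 0 := by
  funext s; rw [schurFun, Nat.card_eq_fintype_card]; revert s; decide

lemma schur5_2111 : schurFun 5 (YoungDiagram.ofRowLens [2,1,1,1] (by decide)) = fun s =>
    if ∃ k : Fin 4, s = fun j => (if j = k then true else false) then 1 else 0 := by
  funext s; rw [schurFun, Nat.card_eq_fintype_card]; revert s; decide

lemma supp_const (μ : YoungDiagram) (h4 : μ.card = 4) (b : Bool)
    (hA : 1 ≤ schurFun 4 μ ![b, b, b]) :
    schurFun 4 μ = fun s => if s = ![b, b, b] then 1 else 0 := by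
  rcases shape4 μ h4 with rfl | rfl | rfl | rfl | rfl
  · rw [schur4_4] at hA ⊢
    cases b
    · exact absurd hA (by decide)
    · funext s; revert s; decide
  · rw [schur4_31] at hA ⊢
    cases b <;> exact absurd hA (by decide)
  · rw [schur4_22] at hA ⊢
    cases b <;> exact absurd hA (by decide)
  · rw [schur4_211] at hA ⊢
    cases b <;> exact absurd hA (by decide)
  · rw [schur4_1111] at hA ⊢
    cases b
    · funext s; revert s; decide
    · exact absurd hA (by decide)

lemma supp_AB (μ : YoungDiagram) (h4 : μ.card = 4) (b : Bool)
    (hA : 1 ≤ schurFun 4 μ ![!b, b, b]) (hB : 1 ≤ schurFun 4 μ ![b, !b, b]) :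
    schurFun 4 μ = fun s =>
      if s = ![!b, b, b] ∨ s = ![b, !b, b] ∨ s = ![b, b, !b] then 1 else 0 := by
  rcases shape4 μ h4 with rfl | rfl | rfl | rfl | rfl
  · rw [schur4_4] at hA hB ⊢
    cases b <;> exact absurd hA (by decide)
  · rw [schur4_31] at hA hB ⊢
    cases b
    · exact absurd hA (by decide)
    · funext s; revert s; decide
  · rw [schur4_22] at hA hB ⊢
    cases b <;> exact absurd hA (by decide)
  · rw [schur4_211] at hA hB ⊢
    cases b
    · funext s; revert s; decide
    · exact absurd hA (by decide)
  · rw [schur4_1111] at hA hB ⊢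
    cases b <;> exact absurd hA (by decide)

end AuxYoung

namespace SCG

lemma comp_refl (G : SCG 5 5) (S : Set ℕ) (v : G.V) : v ∈ G.Comp S v :=
  Relation.ReflTransGen.refl

lemma comp_tail_s12 {G : SCG 5 5} {S : Set ℕ} {v0 v w : G.V} {i : ℕ}
    (hv : v ∈ G.Comp S v0) (hi : i ∈ S) (hE : G.E i v w) : w ∈ G.Comp S v0 :=
  Relation.ReflTransGen.tail hv ⟨i, hi, hE⟩

lemma restGF_pos (G : SCG 5 5) {S : Set G.V} {v : G.V} (hv : v ∈ S) (lo : ℕ)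
    (s : Fin 3 → Bool) (hs : ∀ j : Fin 3, G.sgn v (lo + j.1) = s j) :
    1 ≤ G.restGF S lo 4 s := by
  letI : Fintype G.V := G.fintypeV
  simp only [SCG.restGF]
  haveI : Nonempty {w : G.V // w ∈ S ∧ ∀ j : Fin (4-1), G.sgn w (lo + j.1) = s j} :=
    ⟨⟨v, hv, hs⟩⟩
  exact Nat.card_pos

end SCG

namespace SCG

lemma final_count (G : SCG 5 5) (b : Bool) (u w x y : G.V)
    (hex : ∀ v : G.V, v = u ∨ v = w ∨ v = x ∨ v = y)
    (hsu : ∀ j : Fin 4, G.sgn u (j.1 + 1) = if j = 0 then !b else b)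
    (hsw : ∀ j : Fin 4, G.sgn w (j.1 + 1) = if j = 1 then !b else b)
    (hsx : ∀ j : Fin 4, G.sgn x (j.1 + 1) = if j = 2 then !b else b)
    (hsy : ∀ j : Fin 4, G.sgn y (j.1 + 1) = if j = 3 then !b else b) :
    (G.fullGF = fun s =>
      if ∃ k : Fin 4, s = fun j => if j = k then !b else b then 1 else 0) ∧
    Nat.card G.V = 4 := by
  letI : Fintype G.V := G.fintypeV
  letI : DecidableEq G.V := Classical.decEq _
  have contra : ∀ (p q : G.V) (kp kq : Fin 4), kp ≠ kq →
      (∀ j : Fin 4, G.sgn p (j.1 + 1) = if j = kp then !b else b) →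
      (∀ j : Fin 4, G.sgn q (j.1 + 1) = if j = kq then !b else b) →
      (∀ j : Fin 4, G.sgn p (j.1 + 1) = G.sgn q (j.1 + 1)) → False := by
    intro p q kp kq hne hp hq h
    have h0 := ((hp kp).symm.trans ((h kp).trans (hq kp)))
    rw [if_pos rfl, if_neg hne] at h0
    exact Bool.not_ne_self b h0
  have inj : ∀ v1 v2 : G.V,
      (∀ j : Fin 4, G.sgn v1 (j.1 + 1) = G.sgn v2 (j.1 + 1)) → v1 = v2 := by
    intro v1 v2 h
    rcases hex v1 with rfl | rfl | rfl | rfl <;> rcases hex v2 with rfl | rfl | rfl | rfl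
    · rfl
    · exact (contra _ _ 0 1 (by decide) hsu hsw h).elim
    · exact (contra _ _ 0 2 (by decide) hsu hsx h).elim
    · exact (contra _ _ 0 3 (by decide) hsu hsy h).elim
    · exact (contra _ _ 1 0 (by decide) hsw hsu h).elim
    · rfl
    · exact (contra _ _ 1 2 (by decide) hsw hsx h).elim
    · exact (contra _ _ 1 3 (by decide) hsw hsy h).elim
    · exact (contra _ _ 2 0 (by decide) hsx hsu h).elim
    · exact (contra _ _ 2 1 (by decide) hsx hsw h).elim
    · rfl
    · exact (contra _ _ 2 3 (by decide) hsx hsy h).elim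
    · exact (contra _ _ 3 0 (by decide) hsy hsu h).elim
    · exact (contra _ _ 3 1 (by decide) hsy hsw h).elim
    · exact (contra _ _ 3 2 (by decide) hsy hsx h).elim
    · rfl
  constructor
  · funext s
    simp only [SCG.fullGF]
    by_cases hs : ∃ k : Fin 4, s = fun j => if j = k then !b else b
    · rw [if_pos hs]
      obtain ⟨k, rfl⟩ := hs
      haveI hne : Nonempty {v : G.V // ∀ j : Fin (5-1),
          G.sgn v (j.1 + 1) = (fun j : Fin 4 => if j = k then !b else b) j} := by
        fin_cases k
        · exact ⟨⟨u, hsu⟩⟩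
        · exact ⟨⟨w, hsw⟩⟩
        · exact ⟨⟨x, hsx⟩⟩
        · exact ⟨⟨y, hsy⟩⟩
      haveI : Subsingleton {v : G.V // ∀ j : Fin (5-1),
          G.sgn v (j.1 + 1) = (fun j : Fin 4 => if j = k then !b else b) j} := by
        constructor
        rintro ⟨v1, h1⟩ ⟨v2, h2⟩
        exact Subtype.ext (inj v1 v2 (fun j => (h1 j).trans (h2 j).symm))
      exact Nat.card_unique
    · rw [if_neg hs]
      haveI : IsEmpty {v : G.V // ∀ j : Fin (5-1),
          G.sgn v (j.1 + 1) = s j} := by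
        constructor
        rintro ⟨v, hv⟩
        rcases hex v with rfl | rfl | rfl | rfl
        · exact hs ⟨0, funext fun j => (hv j).symm.trans (hsu j)⟩
        · exact hs ⟨1, funext fun j => (hv j).symm.trans (hsw j)⟩
        · exact hs ⟨2, funext fun j => (hv j).symm.trans (hsx j)⟩
        · exact hs ⟨3, funext fun j => (hv j).symm.trans (hsy j)⟩
      exact Nat.card_of_isEmpty
  · have nuw : u ≠ w := fun e =>
      contra u w 0 1 (by decide) hsu hsw (by rw [e]; exact fun j => rfl)
    have nux : u ≠ x := fun e =>
      contra u x 0 2 (by decide) hsu hsx (by rw [e]; exact fun j => rfl)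
    have nuy : u ≠ y := fun e =>
      contra u y 0 3 (by decide) hsu hsy (by rw [e]; exact fun j => rfl)
    have nwx : w ≠ x := fun e =>
      contra w x 1 2 (by decide) hsw hsx (by rw [e]; exact fun j => rfl)
    have nwy : w ≠ y := fun e =>
      contra w y 1 3 (by decide) hsw hsy (by rw [e]; exact fun j => rfl)
    have nxy : x ≠ y := fun e =>
      contra x y 2 3 (by decide) hsx hsy (by rw [e]; exact fun j => rfl)
    have huniv : (Finset.univ : Finset G.V) = {u, w, x, y} := by
      ext v
      simp only [Finset.mem_univ, true_iff, Finset.mem_insert, Finset.mem_singleton]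
      exact hex v
    rw [Nat.card_eq_fintype_card, ← Finset.card_univ, huniv]
    rw [Finset.card_insert_of_notMem (by simp [nuw, nux, nuy]),
      Finset.card_insert_of_notMem (by simp [nwx, nwy]),
      Finset.card_insert_of_notMem (by simp [nxy]), Finset.card_singleton]

end SCG

/-- A connected degree-5 locally Schur positive graph with `LSF₄` containing a vertex
with a 2-edge but no 3- or 4-edge has generating function `s_{(4,1)}` or
`s_{(2,1,1,1)}`; in particular it has exactly 4 vertices. -/
theorem statement12 (G : SCG 5 5) (hP : G.Proper) (hconn : G.Connected)
    (h1 : G.Ax1) (h2 : G.Ax2) (h3 : G.Ax3) (h5 : G.Ax5)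
    (hLSP : G.LSP 5) (hLSF : G.LSF 4)
    (u : G.V) (hu2 : G.hasNbr 2 u) (hu3 : ¬G.hasNbr 3 u) (hu4 : ¬G.hasNbr 4 u) :
    (G.fullGF = schurFun 5 (YoungDiagram.ofRowLens [4, 1] (by decide)) ∨
     G.fullGF = schurFun 5 (YoungDiagram.ofRowLens [2, 1, 1, 1] (by decide))) ∧
    Nat.card G.V = 4 := by
  classical
  -- sign of u
  obtain ⟨b, hb⟩ : ∃ b, G.sgn u 2 = b := ⟨_, rfl⟩
  have h13u := h1 3 (by norm_num) (by norm_num) u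
  norm_num at h13u
  have s23 : G.sgn u 2 = G.sgn u 3 := by
    by_contra hne
    obtain ⟨z, hz, -⟩ := h13u.mp hne
    exact hu3 ⟨z, hz⟩
  have su3 : G.sgn u 3 = b := s23.symm.trans hb
  have h14u := h1 4 (by norm_num) (by norm_num) u
  norm_num at h14u
  have s34 : G.sgn u 3 = G.sgn u 4 := by
    by_contra hne
    obtain ⟨z, hz, -⟩ := h14u.mp hne
    exact hu4 ⟨z, hz⟩
  have su4 : G.sgn u 4 = b := s34.symm.trans su3
  -- the 2-neighbor w
  obtain ⟨w, hEuw⟩ := hu2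
  have h2uw := h2 2 u w hEuw
  norm_num at h2uw
  obtain ⟨sw1, sw2, hrest2⟩ := h2uw
  have sw4b : G.sgn w 4 = b := by rw [hrest2 4 (by norm_num), su4]
  have sw3u : G.sgn w 3 = G.sgn u 3 := by
    by_contra hne
    exact ((h3 2 u w hEuw).2 (fun hh => hne hh.symm)) s23.symm
  have sw3b : G.sgn w 3 = b := sw3u.trans su3
  -- LSF at i = 3, v = u
  obtain ⟨μ, hμ4, hμeq⟩ := hLSF 3 (by norm_num) (by norm_num) u
  have hμeq' : G.restGF (G.Comp (Set.Icc 2 3) u) 1 4 = schurFun 4 μ := hμeq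
  have hmem2 : (2:ℕ) ∈ Set.Icc (2:ℕ) 3 := Set.mem_Icc.mpr (by norm_num)
  have hmem3 : (3:ℕ) ∈ Set.Icc (2:ℕ) 3 := Set.mem_Icc.mpr (by norm_num)
  have hu_mem : u ∈ G.Comp (Set.Icc 2 3) u := G.comp_refl _ u
  have hw_mem := SCG.comp_tail_s12 hu_mem hmem2 hEuw
  -- first signature coordinate of u
  have su1 : G.sgn u 1 = !b := by
    by_contra hne
    have su1' : G.sgn u 1 = b := by
      by_contra h2'
      exact hne (Bool.eq_not_iff.mpr h2')
    have sw1' : G.sgn w 1 = !b := by rw [sw1, su1']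
    have sw2' : G.sgn w 2 = !b := by rw [sw2, hb]
    have wu : ∀ j : Fin 3, G.sgn u (1 + j.1) = (![b, b, b]) j := by
      intro j; fin_cases j
      · simpa using su1'
      · simpa using hb
      · simpa using su3
    have ww : ∀ j : Fin 3, G.sgn w (1 + j.1) = (![!b, !b, b]) j := by
      intro j; fin_cases j
      · simpa using sw1'
      · simpa using sw2'
      · simpa using sw3b
    have hA : 1 ≤ schurFun 4 μ ![b, b, b] := by
      rw [← hμeq']; exact G.restGF_pos hu_mem _ _ wu
    have hB : 1 ≤ schurFun 4 μ ![!b, !b, b] := by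
      rw [← hμeq']; exact G.restGF_pos hw_mem _ _ ww
    rw [supp_const μ hμ4 b hA] at hB
    revert hB; cases b <;> decide
  have sw1b : G.sgn w 1 = b := by rw [sw1, su1, Bool.not_not]
  have sw2b : G.sgn w 2 = !b := by rw [sw2, hb]
  -- support of the {2,3}-component of u
  have wu : ∀ j : Fin 3, G.sgn u (1 + j.1) = (![!b, b, b]) j := by
    intro j; fin_cases j
    · simpa using su1
    · simpa using hb
    · simpa using su3
  have ww : ∀ j : Fin 3, G.sgn w (1 + j.1) = (![b, !b, b]) j := by
    intro j; fin_cases j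
    · simpa using sw1b
    · simpa using sw2b
    · simpa using sw3b
  have hA : 1 ≤ schurFun 4 μ ![!b, b, b] := by
    rw [← hμeq']; exact G.restGF_pos hu_mem _ _ wu
  have hB : 1 ≤ schurFun 4 μ ![b, !b, b] := by
    rw [← hμeq']; exact G.restGF_pos hw_mem _ _ ww
  have hsupp := supp_AB μ hμ4 b hA hB
  -- the 3-neighbor x of w
  have h13w := h1 3 (by norm_num) (by norm_num) w
  norm_num at h13w
  have huniq3w := h13w.mp (by rw [sw2b, sw3b]; exact Bool.not_ne_self b)
  obtain ⟨x, hEwx, -⟩ := huniq3w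
  have huniq3w : ∃! z, G.E 3 w z := h13w.mp (by rw [sw2b, sw3b]; exact Bool.not_ne_self b)
  have h2wx := h2 3 w x hEwx
  norm_num at h2wx
  obtain ⟨sx2, sx3, hrest3⟩ := h2wx
  have sx2b : G.sgn x 2 = b := by rw [sx2, sw2b, Bool.not_not]
  have sx3b : G.sgn x 3 = !b := by rw [sx3, sw3b]
  have sx4b : G.sgn x 4 = b := by
    by_contra hne
    have h34 := (h3 3 w x hEwx).2
    norm_num at h34
    exact (h34 (fun hh => hne (hh.symm.trans sw4b))) (sw4b.trans sw3b.symm)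
  have hx_mem := SCG.comp_tail_s12 hw_mem hmem3 hEwx
  -- first coordinate of x
  have sx1b : G.sgn x 1 = b := by
    obtain ⟨c, hcx⟩ : ∃ c, G.sgn x 1 = c := ⟨_, rfl⟩
    have wx : ∀ j : Fin 3, G.sgn x (1 + j.1) = (![c, b, !b]) j := by
      intro j; fin_cases j
      · simpa using hcx
      · simpa using sx2b
      · simpa using sx3b
    have hX : 1 ≤ schurFun 4 μ ![c, b, !b] := by
      rw [← hμeq']; exact G.restGF_pos hx_mem _ _ wx
    rw [hsupp] at hX
    rw [hcx]
    revert hX; cases b <;> cases c <;> decide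
  -- the 4-neighbor y of x
  have h14x := h1 4 (by norm_num) (by norm_num) x
  norm_num at h14x
  have huniq4x : ∃! z, G.E 4 x z :=
    h14x.mp (by rw [sx3b, sx4b]; exact Bool.not_ne_self b)
  obtain ⟨y, hExy, -⟩ := huniq4x
  have huniq4x : ∃! z, G.E 4 x z :=
    h14x.mp (by rw [sx3b, sx4b]; exact Bool.not_ne_self b)
  have h2xy := h2 4 x y hExy
  norm_num at h2xy
  obtain ⟨sy3, sy4, hrest4⟩ := h2xy
  have sy3b : G.sgn y 3 = b := by rw [sy3, sx3b, Bool.not_not]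
  have sy4b : G.sgn y 4 = !b := by rw [sy4, sx4b]
  have sy1b : G.sgn y 1 = b := by rw [hrest4 1 (by norm_num), sx1b]
  -- LSF at i = 4, v = w
  obtain ⟨ν, hν4, hνeq⟩ := hLSF 4 (by norm_num) (by norm_num) w
  have hνeq' : G.restGF (G.Comp (Set.Icc 3 4) w) 2 4 = schurFun 4 ν := hνeq
  have hm3 : (3:ℕ) ∈ Set.Icc (3:ℕ) 4 := Set.mem_Icc.mpr (by norm_num)
  have hm4 : (4:ℕ) ∈ Set.Icc (3:ℕ) 4 := Set.mem_Icc.mpr (by norm_num)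
  have hw_memD : w ∈ G.Comp (Set.Icc 3 4) w := G.comp_refl _ w
  have hx_memD := SCG.comp_tail_s12 hw_memD hm3 hEwx
  have hy_memD := SCG.comp_tail_s12 hx_memD hm4 hExy
  have wwD : ∀ j : Fin 3, G.sgn w (2 + j.1) = (![!b, b, b]) j := by
    intro j; fin_cases j
    · simpa using sw2b
    · simpa using sw3b
    · simpa using sw4b
  have wxD : ∀ j : Fin 3, G.sgn x (2 + j.1) = (![b, !b, b]) j := by
    intro j; fin_cases j
    · simpa using sx2b
    · simpa using sx3b
    · simpa using sx4b
  have hAD : 1 ≤ schurFun 4 ν ![!b, b, b] := by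
    rw [← hνeq']; exact G.restGF_pos hw_memD _ _ wwD
  have hBD : 1 ≤ schurFun 4 ν ![b, !b, b] := by
    rw [← hνeq']; exact G.restGF_pos hx_memD _ _ wxD
  have hsuppD := supp_AB ν hν4 b hAD hBD
  -- second coordinate of y
  have sy2b : G.sgn y 2 = b := by
    obtain ⟨d, hdy⟩ : ∃ d, G.sgn y 2 = d := ⟨_, rfl⟩
    have wy : ∀ j : Fin 3, G.sgn y (2 + j.1) = (![d, b, !b]) j := by
      intro j; fin_cases j
      · simpa using hdy
      · simpa using sy3b
      · simpa using sy4b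
    have hY : 1 ≤ schurFun 4 ν ![d, b, !b] := by
      rw [← hνeq']; exact G.restGF_pos hy_memD _ _ wy
    rw [hsuppD] at hY
    rw [hdy]
    revert hY; cases b <;> cases d <;> decide
  -- w has no 4-neighbor
  have hw4 : ¬G.hasNbr 4 w := by
    rintro ⟨z, hEwz⟩
    have hz_mem := SCG.comp_tail_s12 hw_memD hm4 hEwz
    have h2wz := h2 4 w z hEwz
    norm_num at h2wz
    obtain ⟨sz3, sz4, -⟩ := h2wz
    obtain ⟨e, he⟩ : ∃ e, G.sgn z 2 = e := ⟨_, rfl⟩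
    have wz : ∀ j : Fin 3, G.sgn z (2 + j.1) = (![e, !b, !b]) j := by
      intro j; fin_cases j
      · simpa using he
      · simpa [sw3b] using sz3
      · simpa [sw4b] using sz4
    have hZ : 1 ≤ schurFun 4 ν ![e, !b, !b] := by
      rw [← hνeq']; exact G.restGF_pos hz_mem _ _ wz
    rw [hsuppD] at hZ
    revert hZ; cases b <;> cases e <;> decide
  -- x has no 2-neighbor
  have hx2 : ¬G.hasNbr 2 x := by
    rintro ⟨p, hExp⟩
    have hp_mem := SCG.comp_tail_s12 hx_mem hmem2 hExp
    have h2xp := h2 2 x p hExp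
    norm_num at h2xp
    obtain ⟨sp1, sp2, -⟩ := h2xp
    obtain ⟨e, he⟩ : ∃ e, G.sgn p 3 = e := ⟨_, rfl⟩
    have wp : ∀ j : Fin 3, G.sgn p (1 + j.1) = (![!b, !b, e]) j := by
      intro j; fin_cases j
      · simpa [sx1b] using sp1
      · simpa [sx2b] using sp2
      · simpa using he
    have hp : 1 ≤ schurFun 4 μ ![!b, !b, e] := by
      rw [← hμeq']; exact G.restGF_pos hp_mem _ _ wp
    rw [hsupp] at hp
    revert hp; cases b <;> cases e <;> decide
  -- y has no 3-neighbor
  have hy3 : ¬G.hasNbr 3 y := by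
    rintro ⟨q, hEyq⟩
    have hq_mem := SCG.comp_tail_s12 hy_memD hm3 hEyq
    have h2yq := h2 3 y q hEyq
    norm_num at h2yq
    obtain ⟨sq2, sq3, -⟩ := h2yq
    obtain ⟨e, he⟩ : ∃ e, G.sgn q 4 = e := ⟨_, rfl⟩
    have wq : ∀ j : Fin 3, G.sgn q (2 + j.1) = (![!b, !b, e]) j := by
      intro j; fin_cases j
      · simpa [sy2b] using sq2
      · simpa [sy3b] using sq3
      · simpa using he
    have hq : 1 ≤ schurFun 4 ν ![!b, !b, e] := by
      rw [← hνeq']; exact G.restGF_pos hq_mem _ _ wq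
    rw [hsuppD] at hq
    revert hq; cases b <;> cases e <;> decide
  -- y has no 2-neighbor
  have hy2 : ¬G.hasNbr 2 y := by
    obtain ⟨ρ, hρ4, hρeq⟩ := hLSF 3 (by norm_num) (by norm_num) y
    have hρeq' : G.restGF (G.Comp (Set.Icc 2 3) y) 1 4 = schurFun 4 ρ := hρeq
    have hy_memY : y ∈ G.Comp (Set.Icc 2 3) y := G.comp_refl _ y
    have wyY : ∀ j : Fin 3, G.sgn y (1 + j.1) = (![b, b, b]) j := by
      intro j; fin_cases j
      · simpa using sy1b
      · simpa using sy2b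
      · simpa using sy3b
    have hYc : 1 ≤ schurFun 4 ρ ![b, b, b] := by
      rw [← hρeq']; exact G.restGF_pos hy_memY _ _ wyY
    have hcst := supp_const ρ hρ4 b hYc
    rintro ⟨p, hEyp⟩
    have hp_mem := SCG.comp_tail_s12 hy_memY hmem2 hEyp
    have h2yp := h2 2 y p hEyp
    norm_num at h2yp
    obtain ⟨sp1, sp2, -⟩ := h2yp
    obtain ⟨e, he⟩ : ∃ e, G.sgn p 3 = e := ⟨_, rfl⟩
    have wp : ∀ j : Fin 3, G.sgn p (1 + j.1) = (![!b, !b, e]) j := by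
      intro j; fin_cases j
      · simpa [sy1b] using sp1
      · simpa [sy2b] using sp2
      · simpa using he
    have hp : 1 ≤ schurFun 4 ρ ![!b, !b, e] := by
      rw [← hρeq']; exact G.restGF_pos hp_mem _ _ wp
    rw [hcst] at hp
    revert hp; cases b <;> cases e <;> decide
  -- unique neighbors
  have h12u := h1 2 (by norm_num) (by norm_num) u
  norm_num at h12u
  have huniq2u : ∃! z, G.E 2 u z :=
    h12u.mp (by rw [su1, hb]; exact Bool.not_ne_self b)
  have h12w := h1 2 (by norm_num) (by norm_num) w
  norm_num at h12w
  have huniq2w : ∃! z, G.E 2 w z :=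
    h12w.mp (by rw [sw1b, sw2b]; exact fun hh => Bool.not_ne_self b hh.symm)
  have h13x := h1 3 (by norm_num) (by norm_num) x
  norm_num at h13x
  have huniq3x : ∃! z, G.E 3 x z :=
    h13x.mp (by rw [sx2b, sx3b]; exact fun hh => Bool.not_ne_self b hh.symm)
  have h14y := h1 4 (by norm_num) (by norm_num) y
  norm_num at h14y
  have huniq4y : ∃! z, G.E 4 y z :=
    h14y.mp (by rw [sy3b, sy4b]; exact fun hh => Bool.not_ne_self b hh.symm)
  have hEwu : G.E 2 w u := (hP 2 u w hEuw).1
  have hExw : G.E 3 x w := (hP 3 w x hEwx).1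
  have hEyx : G.E 4 y x := (hP 4 x y hExy).1
  -- exhaustiveness
  have hex : ∀ v : G.V, v = u ∨ v = w ∨ v = x ∨ v = y := by
    intro v
    have hv : Relation.ReflTransGen
        (fun a c => ∃ i ∈ (Set.univ : Set ℕ), G.E i a c) u v := hconn u v
    induction hv with
    | refl => exact Or.inl rfl
    | tail hpre hstep ih =>
      obtain ⟨i, -, hE⟩ := hstep
      obtain ⟨hsym, hne', hgt, hlt⟩ := hP i _ _ hE
      interval_cases i
      · rcases ih with rfl | rfl | rfl | rfl
        · exact Or.inr (Or.inl (huniq2u.unique hE hEuw))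
        · exact Or.inl (huniq2w.unique hE hEwu)
        · exact absurd ⟨_, hE⟩ hx2
        · exact absurd ⟨_, hE⟩ hy2
      · rcases ih with rfl | rfl | rfl | rfl
        · exact absurd ⟨_, hE⟩ hu3
        · exact Or.inr (Or.inr (Or.inl (huniq3w.unique hE hEwx)))
        · exact Or.inr (Or.inl (huniq3x.unique hE hExw))
        · exact absurd ⟨_, hE⟩ hy3
      · rcases ih with rfl | rfl | rfl | rfl
        · exact absurd ⟨_, hE⟩ hu4
        · exact absurd ⟨_, hE⟩ hw4
        · exact Or.inr (Or.inr (Or.inr (huniq4x.unique hE hExy)))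
        · exact Or.inr (Or.inr (Or.inl (huniq4y.unique hE hEyx)))
  -- signatures in packaged form
  have hsu4 : ∀ j : Fin 4, G.sgn u (j.1 + 1) = if j = 0 then !b else b := by
    intro j; fin_cases j
    · simpa using su1
    · simpa using hb
    · simpa using su3
    · simpa using su4
  have hsw4 : ∀ j : Fin 4, G.sgn w (j.1 + 1) = if j = 1 then !b else b := by
    intro j; fin_cases j
    · simpa using sw1b
    · simpa using sw2b
    · simpa using sw3b
    · simpa using sw4b
  have hsx4 : ∀ j : Fin 4, G.sgn x (j.1 + 1) = if j = 2 then !b else b := by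
    intro j; fin_cases j
    · simpa using sx1b
    · simpa using sx2b
    · simpa using sx3b
    · simpa using sx4b
  have hsy4 : ∀ j : Fin 4, G.sgn y (j.1 + 1) = if j = 3 then !b else b := by
    intro j; fin_cases j
    · simpa using sy1b
    · simpa using sy2b
    · simpa using sy3b
    · simpa using sy4b
  obtain ⟨hGF, hcard⟩ := G.final_count b u w x y hex hsu4 hsw4 hsx4 hsy4
  refine ⟨?_, hcard⟩
  cases b
  · right
    rw [hGF, schur5_2111]
    simp only [Bool.not_false]
  · left
    rw [hGF, schur5_41]
    simp only [Bool.not_true]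
end
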